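/- arXiv:2605.17422 — 6 statements merged into one kernel-verified Lean document; each statement's English description precedes it below -/
import Mathlib

section
/- Let p₁ ≥ 1 and C_f > 0, and let f : ℝ → ℝ be C¹ with f'(a+s) − f'(a) ≥ C_f s^{p₁} for all a ∈ ℝ and s > 0. Let t > 0, E > 0, and let v : ℝ → ℝ be a function in L²(ℝ) with ‖v‖_{L²(ℝ)} ≤ E which satisfies the Oleinik-type estimate f'(v(y)) − f'(v(x)) ≤ (y−x)/t for all x < y. Then v ∈ L∞(ℝ) with ‖v‖_{L∞(ℝ)} ≤ 4·(E²/(C_f t))^{1/(p₁+2)}. -/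
open MeasureTheory
open scoped ENNReal

/-- **`L∞` decay from the Oleinik estimate, `L²` data** (Lemma 2.2, first part).
If `f` is `C¹` with `f'(a+s) - f'(a) ≥ C_f s^{p₁}` for all `a ∈ ℝ`, `s > 0`, and
`v ∈ L²(ℝ)` satisfies `‖v‖_{L²} ≤ E` together with the Oleinik-type estimate
`f'(v(y)) - f'(v(x)) ≤ (y-x)/t` for all `x < y`, then `v ∈ L∞(ℝ)` with
`‖v‖_{L∞} ≤ 4 (E²/(C_f t))^{1/(p₁+2)}`. -/
theorem linf_decay_from_oleinik_L2
    (p₁ C_f t E : ℝ) (f v : ℝ → ℝ)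
    (hp₁ : 1 ≤ p₁) (hCf : 0 < C_f) (ht : 0 < t) (hE : 0 < E)
    (hf : ContDiff ℝ 1 f)
    (hincr : ∀ a s : ℝ, 0 < s → C_f * s ^ p₁ ≤ deriv f (a + s) - deriv f a)
    (hv2 : MemLp v 2 volume)
    (hvE : eLpNorm v 2 volume ≤ ENNReal.ofReal E)
    (hOleinik : ∀ x y : ℝ, x < y → deriv f (v y) - deriv f (v x) ≤ (y - x) / t) :
    MemLp v ⊤ volume ∧
      eLpNorm v ⊤ volume ≤ ENNReal.ofReal (4 * (E ^ 2 / (C_f * t)) ^ (1 / (p₁ + 2))) := by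
  have hp2 : (0:ℝ) < p₁ + 2 := by linarith
  have ht' : t ≠ 0 := ne_of_gt ht
  set K : ℝ := (E ^ 2 / (C_f * t)) ^ (1 / (p₁ + 2)) with hKdef
  have hK0 : 0 < K := by
    apply Real.rpow_pos_of_pos; positivity
  -- pointwise bound
  have hpt : ∀ x₀ : ℝ, |v x₀| ≤ 4 * K := by
    intro x₀
    by_contra hcon
    push_neg at hcon
    set m : ℝ := |v x₀| with hmdef
    have hm : 0 < m := lt_trans (by positivity) hcon
    have hm2 : 0 < m / 2 := by linarith
    set L : ℝ := C_f * t * (m / 2) ^ p₁ with hLdef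
    have hL0 : 0 < L := by positivity
    have hLt : L / t = C_f * (m / 2) ^ p₁ := by
      rw [hLdef]; field_simp
    -- an interval of length L on which |v| ≥ m/2
    have hib : ∃ a b : ℝ, b - a = L ∧ ∀ y ∈ Set.Ioo a b, m / 2 ≤ |v y| := by
      rcases abs_choice (v x₀) with hc | hc
      · -- v x₀ = m > 0 : look to the left
        refine ⟨x₀ - L, x₀, by ring, fun y hy => ?_⟩
        refine le_trans ?_ (le_abs_self (v y))
        by_contra hvy
        push_neg at hvy
        have hvx : v x₀ = m := by rw [hmdef, hc]
        have hs : m / 2 < v x₀ - v y := by rw [hvx]; linarith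
        have hs0 : 0 < v x₀ - v y := lt_trans hm2 hs
        have h1 := hincr (v y) (v x₀ - v y) hs0
        rw [show v y + (v x₀ - v y) = v x₀ by ring] at h1
        have h2 := hOleinik y x₀ hy.2
        have h3 : (x₀ - y) / t < L / t :=
          (div_lt_div_iff_of_pos_right ht).mpr (by linarith [hy.1])
        have h4 : C_f * (v x₀ - v y) ^ p₁ < C_f * (m / 2) ^ p₁ := by
          calc C_f * (v x₀ - v y) ^ p₁ ≤ (x₀ - y) / t := le_trans h1 h2
          _ < L / t := h3
          _ = C_f * (m / 2) ^ p₁ := hLt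
        have h5 : (m / 2) ^ p₁ ≤ (v x₀ - v y) ^ p₁ :=
          Real.rpow_le_rpow (le_of_lt hm2) (le_of_lt hs) (by linarith)
        nlinarith
      · -- v x₀ = -m : look to the right
        refine ⟨x₀, x₀ + L, by ring, fun y hy => ?_⟩
        refine le_trans ?_ (neg_le_abs (v y))
        by_contra hvy
        push_neg at hvy
        have hvx : v x₀ = -m := by rw [hmdef, hc]; ring
        have hs : m / 2 < v y - v x₀ := by rw [hvx]; linarith
        have hs0 : 0 < v y - v x₀ := lt_trans hm2 hs
        have h1 := hincr (v x₀) (v y - v x₀) hs0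
        rw [show v x₀ + (v y - v x₀) = v y by ring] at h1
        have h2 := hOleinik x₀ y hy.1
        have h3 : (y - x₀) / t < L / t :=
          (div_lt_div_iff_of_pos_right ht).mpr (by linarith [hy.2])
        have h4 : C_f * (v y - v x₀) ^ p₁ < C_f * (m / 2) ^ p₁ := by
          calc C_f * (v y - v x₀) ^ p₁ ≤ (y - x₀) / t := le_trans h1 h2
          _ < L / t := h3
          _ = C_f * (m / 2) ^ p₁ := hLt
        have h5 : (m / 2) ^ p₁ ≤ (v y - v x₀) ^ p₁ :=
          Real.rpow_le_rpow (le_of_lt hm2) (le_of_lt hs) (by linarith)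
        nlinarith
    obtain ⟨a, b, hba, hbd⟩ := hib
    have hab : a < b := by linarith [hL0, hba.symm ▸ hL0]
    -- integral estimate
    have hmono : ∫⁻ y in Set.Ioo a b, ENNReal.ofReal (m / 2) ^ (2:ℝ)
        ≤ ∫⁻ y in Set.Ioo a b, (‖v y‖₊ : ℝ≥0∞) ^ (2:ℝ) := by
      refine lintegral_mono_ae ((ae_restrict_iff' measurableSet_Ioo).2
        (Filter.Eventually.of_forall fun y hy => ?_))
      refine ENNReal.rpow_le_rpow ?_ (by norm_num)
      rw [← enorm_eq_nnnorm, ← ofReal_norm, Real.norm_eq_abs]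
      exact ENNReal.ofReal_le_ofReal (hbd y hy)
    have hconst : ∫⁻ _ in Set.Ioo a b, ENNReal.ofReal (m / 2) ^ (2:ℝ)
        = ENNReal.ofReal (m / 2) ^ (2:ℝ) * ENNReal.ofReal L := by
      rw [setLIntegral_const, Real.volume_Ioo, hba]
    have htot : ∫⁻ y in Set.Ioo a b, (‖v y‖₊ : ℝ≥0∞) ^ (2:ℝ)
        ≤ ∫⁻ y, (‖v y‖₊ : ℝ≥0∞) ^ (2:ℝ) := setLIntegral_le_lintegral _ _
    have hnorm : ∫⁻ y, (‖v y‖₊ : ℝ≥0∞) ^ (2:ℝ) ≤ ENNReal.ofReal E ^ (2:ℝ) := by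
      have heq := eLpNorm_eq_lintegral_rpow_enorm_toReal (f := v) (μ := volume)
        (p := 2) (by norm_num) (by norm_num)
      have h2r : ((2:ℝ≥0∞)).toReal = (2:ℝ) := by norm_num
      rw [h2r] at heq
      simp only [enorm_eq_nnnorm] at heq
      have := ENNReal.rpow_le_rpow (heq ▸ hvE) (by norm_num : (0:ℝ) ≤ 2)
      rwa [← ENNReal.rpow_mul, one_div, inv_mul_cancel₀ (by norm_num : (2:ℝ) ≠ 0),
        ENNReal.rpow_one] at this
    have hmain : ENNReal.ofReal ((m / 2) ^ (2:ℝ) * L) ≤ ENNReal.ofReal (E ^ (2:ℝ)) := by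
      rw [ENNReal.ofReal_mul (by positivity), ← ENNReal.ofReal_rpow_of_nonneg
        (le_of_lt hm2) (by norm_num), ← ENNReal.ofReal_rpow_of_nonneg
        (le_of_lt hE) (by norm_num)]
      calc ENNReal.ofReal (m / 2) ^ (2:ℝ) * ENNReal.ofReal L
          = ∫⁻ _ in Set.Ioo a b, ENNReal.ofReal (m / 2) ^ (2:ℝ) := hconst.symm
        _ ≤ ∫⁻ y in Set.Ioo a b, (‖v y‖₊ : ℝ≥0∞) ^ (2:ℝ) := hmono
        _ ≤ ∫⁻ y, (‖v y‖₊ : ℝ≥0∞) ^ (2:ℝ) := htot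
        _ ≤ ENNReal.ofReal E ^ (2:ℝ) := hnorm
    have hreal : (m / 2) ^ (2:ℝ) * L ≤ E ^ (2:ℝ) :=
      (ENNReal.ofReal_le_ofReal_iff (by positivity)).mp hmain
    -- rewrite as (m/2)^(p₁+2) ≤ E^2/(C_f t)
    have hpow : (m / 2) ^ (p₁ + 2) * (C_f * t) ≤ E ^ 2 := by
      calc (m / 2) ^ (p₁ + 2) * (C_f * t)
          = (m / 2) ^ (2:ℝ) * (C_f * t * (m / 2) ^ p₁) := by
            rw [Real.rpow_add hm2]; ring
        _ ≤ E ^ (2:ℝ) := by rw [← hLdef]; exact hreal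
        _ = E ^ 2 := by
            rw [show (2:ℝ) = ((2:ℕ):ℝ) by norm_num, Real.rpow_natCast]
    have hdiv : (m / 2) ^ (p₁ + 2) ≤ E ^ 2 / (C_f * t) := by
      rw [le_div_iff₀ (by positivity)]
      exact hpow
    have hfin : m / 2 ≤ K := by
      have h6 := Real.rpow_le_rpow (by positivity) hdiv
        (by positivity : (0:ℝ) ≤ 1 / (p₁ + 2))
      rwa [← Real.rpow_mul (le_of_lt hm2), mul_one_div,
        div_self (ne_of_gt hp2), Real.rpow_one] at h6
    linarith
  -- conclude
  have hbound : ∀ᵐ x ∂(volume : Measure ℝ), ‖v x‖ ≤ 4 * K :=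
    Filter.Eventually.of_forall fun x => by rw [Real.norm_eq_abs]; exact hpt x
  refine ⟨memLp_top_of_bound hv2.aestronglyMeasurable _ hbound, ?_⟩
  rw [eLpNorm_exponent_top]
  exact eLpNormEssSup_le_of_ae_bound hbound
end

section
/- Let p₁ ≥ 1, C_f > 0, M > 0 and t > 0, and let f : ℝ → ℝ be C¹ with f'(a+s) − f'(a) ≥ C_f s^{p₁} for all a ∈ ℝ and s > 0. Let v : ℝ → ℝ satisfy: (i) ‖v‖_{L∞(ℝ)} ≤ M; (ii) the Oleinik-type estimate f'(v(y)) − f'(v(x)) ≤ (y−x)/t for all x < y; and (iii) the map x ↦ x − t·f'(v(x)) is nondecreasing on ℝ (no crossing of backward characteristic lines). Then for every −∞ < a < b < +∞, v ∈ BV^{1/p₁}([a,b]) with TV^{1/p₁}{v;[a,b]} ≤ (2/C_f)·((b−a)/t + sup_{|s|≤M}|f'(s)|). -/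
open MeasureTheory
open scoped ENNReal

noncomputable section

/-- The fractional `γ`-total variation of `g` on `[a,b]`:
`sup` over partitions `a = x₀ ≤ x₁ ≤ ⋯ ≤ x_N = b` of `∑ |g(xᵢ) - g(xᵢ₋₁)|^{1/γ}`. -/
def fracTV (g : ℝ → ℝ) (a b γ : ℝ) : ℝ≥0∞ :=
  ⨆ (n : ℕ) (x : Fin (n + 1) → ℝ)
    (_ : Monotone x ∧ x 0 = a ∧ x (Fin.last n) = b),
    ∑ i : Fin n, ENNReal.ofReal (|g (x i.succ) - g (x i.castSucc)| ^ (1 / γ))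

lemma tele_aux {n : ℕ} (u : Fin (n + 1) → ℝ) :
    ∑ i : Fin n, (u i.succ - u i.castSucc) = u (Fin.last n) - u 0 := by
  induction n with
  | zero => simp
  | succ n ih =>
    rw [Fin.sum_univ_castSucc]
    have h1 := ih (fun j => u j.castSucc)
    simp only [Fin.succ_castSucc] at h1 ⊢
    rw [h1, Fin.succ_last]
    simp

/-- **Fractional BV regularity from the Oleinik estimate** (Lemma 2.2, second part).
If `f` is `C¹` with `f'(a+s) - f'(a) ≥ C_f s^{p₁}`, and `v` is bounded by `M`, satisfies
the Oleinik-type estimate `f'(v(y)) - f'(v(x)) ≤ (y-x)/t` for `x < y`, and the backward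
characteristic map `x ↦ x - t f'(v(x))` is nondecreasing, then for every `a < b` one has
`v ∈ BV^{1/p₁}([a,b])` with
`TV^{1/p₁}{v;[a,b]} ≤ (2/C_f)((b-a)/t + sup_{|s|≤M} |f'(s)|)`. -/
theorem fracBV_from_oleinik
    (p₁ C_f M t : ℝ) (f v : ℝ → ℝ)
    (hp₁ : 1 ≤ p₁) (hCf : 0 < C_f) (hM : 0 < M) (ht : 0 < t)
    (hf : ContDiff ℝ 1 f)
    (hincr : ∀ a s : ℝ, 0 < s → C_f * s ^ p₁ ≤ deriv f (a + s) - deriv f a)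
    (hbd : ∀ x : ℝ, |v x| ≤ M)
    (hOleinik : ∀ x y : ℝ, x < y → deriv f (v y) - deriv f (v x) ≤ (y - x) / t)
    (hchar : Monotone fun x : ℝ => x - t * deriv f (v x)) :
    ∀ a b : ℝ, a < b →
      fracTV v a b (1 / p₁) ≤
        ENNReal.ofReal
          ((2 / C_f) * ((b - a) / t + sSup ((fun s => |deriv f s|) '' Set.Icc (-M) M))) := by
  intro a b hab
  set g : ℝ → ℝ := fun x => deriv f (v x) with hg
  set S : ℝ := sSup ((fun s => |deriv f s|) '' Set.Icc (-M) M) with hSdef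
  have hderiv : Continuous (deriv f) := hf.continuous_deriv le_rfl
  have hbdd : BddAbove ((fun s => |deriv f s|) '' Set.Icc (-M) M) :=
    (isCompact_Icc.image hderiv.abs).bddAbove
  have hS : ∀ x : ℝ, |g x| ≤ S := fun x =>
    le_csSup hbdd ⟨v x, Set.mem_Icc.mpr (abs_le.mp (hbd x)), rfl⟩
  have hS0 : 0 ≤ S := (abs_nonneg _).trans (hS a)
  -- key pointwise inequality
  have hkey : ∀ u w : ℝ, C_f * |u - w| ^ p₁ ≤ |deriv f u - deriv f w| := by
    intro u w
    rcases lt_trichotomy u w with h | h | h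
    · have h1 := hincr u (w - u) (by linarith)
      rw [add_sub_cancel] at h1
      have habs : |u - w| = w - u := by
        rw [abs_sub_comm]; exact abs_of_pos (by linarith)
      rw [habs, abs_sub_comm]
      exact h1.trans (le_abs_self _)
    · simp [h, Real.zero_rpow (by positivity : p₁ ≠ 0)]
    · have h1 := hincr w (u - w) (by linarith)
      rw [add_sub_cancel] at h1
      have habs : |u - w| = u - w := abs_of_pos (by linarith)
      rw [habs]
      exact h1.trans (le_abs_self _)
  -- Oleinik for ≤
  have hOl : ∀ x y : ℝ, x ≤ y → g y - g x ≤ (y - x) / t := by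
    intro x y hxy
    rcases eq_or_lt_of_le hxy with rfl | h
    · simp
    · exact hOleinik x y h
  have habsg : ∀ x y : ℝ, x ≤ y → |g y - g x| ≤ 2 * ((y - x) / t) - (g y - g x) := by
    intro x y hxy
    have h1 := hOl x y hxy
    have h2 : 0 ≤ (y - x) / t := div_nonneg (by linarith) ht.le
    rcases abs_cases (g y - g x) with ⟨he, _⟩ | ⟨he, _⟩ <;> rw [he] <;> linarith
  refine iSup_le fun n => iSup_le fun x => iSup_le fun hx => ?_
  obtain ⟨hmono, hx0, hxl⟩ := hx
  have hsumg : ∑ i : Fin n, |g (x i.succ) - g (x i.castSucc)| ≤ 2 * ((b - a) / t + S) := by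
    have step1 : ∑ i : Fin n, |g (x i.succ) - g (x i.castSucc)| ≤
        ∑ i : Fin n, (2 * ((x i.succ - x i.castSucc) / t) - (g (x i.succ) - g (x i.castSucc))) :=
      Finset.sum_le_sum fun i _ => habsg _ _ (hmono (Fin.castSucc_lt_succ (i := i)).le)
    have t1 : ∑ i : Fin n, (x i.succ - x i.castSucc) = b - a := by
      rw [tele_aux x, hx0, hxl]
    have t2 : ∑ i : Fin n, (g (x i.succ) - g (x i.castSucc)) = g b - g a := by
      rw [tele_aux (fun j => g (x j)), hx0, hxl]
    have step2 : ∑ i : Fin n, (2 * ((x i.succ - x i.castSucc) / t) - (g (x i.succ) - g (x i.castSucc)))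
        = 2 * ((b - a) / t) - (g b - g a) := by
      rw [Finset.sum_sub_distrib, t2]
      congr 1
      rw [← Finset.mul_sum, ← Finset.sum_div, t1]
    have h3 : -(g b - g a) ≤ 2 * S := by
      have := hS a; have := hS b
      have h4 := neg_abs_le (g b); have h5 := le_abs_self (g a)
      linarith
    linarith [step1, step2.le, step2.ge]
  simp only [one_div_one_div]
  calc ∑ i : Fin n, ENNReal.ofReal (|v (x i.succ) - v (x i.castSucc)| ^ p₁)
      ≤ ∑ i : Fin n, ENNReal.ofReal (|g (x i.succ) - g (x i.castSucc)| / C_f) := by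
        refine Finset.sum_le_sum fun i _ => ENNReal.ofReal_le_ofReal ?_
        rw [le_div_iff₀' hCf]
        exact hkey _ _
    _ = ENNReal.ofReal (∑ i : Fin n, |g (x i.succ) - g (x i.castSucc)| / C_f) :=
        (ENNReal.ofReal_sum_of_nonneg fun i _ => by positivity).symm
    _ ≤ ENNReal.ofReal (2 / C_f * ((b - a) / t + S)) := by
        refine ENNReal.ofReal_le_ofReal ?_
        rw [← Finset.sum_div, div_mul_eq_mul_div]
        gcongr

end
end

section
/- Let p₁ ≥ 1 and C_f > 0, and let f : ℝ → ℝ be C¹ with f'(a+s) − f'(a) ≥ C_f s^{p₁} for all a ∈ ℝ and s > 0. Let t > 0, E > 0, and let v : ℝ → ℝ be a function in L¹(ℝ) with ‖v‖_{L¹(ℝ)} ≤ E which satisfies the Oleinik-type estimate f'(v(y)) − f'(v(x)) ≤ (y−x)/t for all x < y. Then v ∈ L∞(ℝ) with ‖v‖_{L∞(ℝ)} ≤ 4·(E/(C_f t))^{1/(p₁+1)}. -/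
open MeasureTheory
open scoped ENNReal

/-- **`L∞` decay from the Oleinik estimate, `L¹` data** (Remark 2.3).
If `f` is `C¹` with `f'(a+s) - f'(a) ≥ C_f s^{p₁}` for all `a ∈ ℝ`, `s > 0`, and
`v ∈ L¹(ℝ)` satisfies `‖v‖_{L¹} ≤ E` together with the Oleinik-type estimate
`f'(v(y)) - f'(v(x)) ≤ (y-x)/t` for all `x < y`, then `v ∈ L∞(ℝ)` with
`‖v‖_{L∞} ≤ 4 (E/(C_f t))^{1/(p₁+1)}`. -/
theorem linf_decay_from_oleinik_L1
    (p₁ C_f t E : ℝ) (f v : ℝ → ℝ)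
    (hp₁ : 1 ≤ p₁) (hCf : 0 < C_f) (ht : 0 < t) (hE : 0 < E)
    (hf : ContDiff ℝ 1 f)
    (hincr : ∀ a s : ℝ, 0 < s → C_f * s ^ p₁ ≤ deriv f (a + s) - deriv f a)
    (hv1 : Integrable v volume)
    (hvE : eLpNorm v 1 volume ≤ ENNReal.ofReal E)
    (hOleinik : ∀ x y : ℝ, x < y → deriv f (v y) - deriv f (v x) ≤ (y - x) / t) :
    MemLp v ⊤ volume ∧
      eLpNorm v ⊤ volume ≤ ENNReal.ofReal (4 * (E / (C_f * t)) ^ (1 / (p₁ + 1))) := by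
  have hCt : 0 < C_f * t := mul_pos hCf ht
  set K := (E / (C_f * t)) ^ (1 / (p₁ + 1)) with hKdef
  have hEt : 0 < E / (C_f * t) := div_pos hE hCt
  have hK0 : 0 < K := Real.rpow_pos_of_pos hEt _
  have hp0 : 0 < p₁ + 1 := by linarith
  -- total L¹ bound, real version
  have hint : ∫ x, ‖v x‖ ≤ E := by
    have h := MeasureTheory.ofReal_integral_norm_eq_lintegral_enorm hv1
    have h2 : eLpNorm v 1 volume = ENNReal.ofReal (∫ x, ‖v x‖) := by
      rw [eLpNorm_one_eq_lintegral_enorm, ← h]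
    rw [h2] at hvE
    exact (ENNReal.ofReal_le_ofReal_iff hE.le).1 hvE
  -- monotone/growth lemma for deriv f
  have hmono : ∀ u w : ℝ, u < w → C_f * (w - u) ^ p₁ ≤ deriv f w - deriv f u := by
    intro u w h
    have := hincr u (w - u) (by linarith)
    simpa using this
  -- K^{p₁+1} = E/(C_f t)
  have hK1 : K ^ (p₁ + 1) = E / (C_f * t) := by
    rw [hKdef, ← Real.rpow_mul hEt.le, one_div,
      inv_mul_cancel₀ (ne_of_gt hp0), Real.rpow_one]
  -- pointwise bound
  have hpt : ∀ x₀ : ℝ, |v x₀| ≤ 4 * K := by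
    intro x₀
    by_contra hcon
    push_neg at hcon
    set s := |v x₀| / 2 with hsdef
    have hsK : 2 * K < s := by
      rw [hsdef]; linarith
    have hs0 : 0 < s := by linarith
    set r := C_f * t * s ^ p₁ with hrdef
    have hsp : 0 < s ^ p₁ := Real.rpow_pos_of_pos hs0 _
    have hr0 : 0 < r := by positivity
    -- produce an interval of length r on which ‖v‖ ≥ s
    obtain ⟨a, b, hab, hIb⟩ :
        ∃ a b : ℝ, b - a = r ∧ ∀ x ∈ Set.Ioo a b, s ≤ ‖v x‖ := by
      rcases le_or_gt 0 (v x₀) with hvpos | hvneg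
      · -- positive case: interval to the left of x₀
        have habs : |v x₀| = v x₀ := abs_of_nonneg hvpos
        refine ⟨x₀ - r, x₀, by ring, ?_⟩
        intro x hx
        rw [Real.norm_eq_abs]
        by_contra hvx
        push_neg at hvx
        have hvx' : v x < s := lt_of_le_of_lt (le_abs_self _) hvx
        have hlt : v x < v x₀ - s := by
          have : v x₀ = 2 * s := by rw [hsdef, habs]; ring
          linarith
        have h1 := hmono (v x) (v x₀) (by linarith)
        have h2 := hOleinik x x₀ hx.2
        have h3 : (x₀ - x) / t < C_f * s ^ p₁ := by
          rw [div_lt_iff₀ ht]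
          have hx1 : x₀ - r < x := hx.1
          calc x₀ - x < r := by linarith
            _ = C_f * s ^ p₁ * t := by rw [hrdef]; ring
        have h4 : s ^ p₁ ≤ (v x₀ - v x) ^ p₁ :=
          Real.rpow_le_rpow hs0.le (by linarith) (by linarith)
        have h5 : C_f * s ^ p₁ ≤ C_f * (v x₀ - v x) ^ p₁ :=
          mul_le_mul_of_nonneg_left h4 hCf.le
        linarith
      · -- negative case: interval to the right of x₀
        have habs : |v x₀| = -v x₀ := abs_of_neg hvneg
        refine ⟨x₀, x₀ + r, by ring, ?_⟩
        intro y hy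
        rw [Real.norm_eq_abs]
        by_contra hvy
        push_neg at hvy
        have hvy' : -s < v y := by
          have := neg_abs_le (v y); linarith
        have hlt : v x₀ + s < v y := by
          have : v x₀ = -(2 * s) := by
            have : -v x₀ = 2 * s := by rw [← habs, hsdef]; ring
            linarith
          linarith
        have h1 := hmono (v x₀) (v y) (by linarith)
        have h2 := hOleinik x₀ y hy.1
        have h3 : (y - x₀) / t < C_f * s ^ p₁ := by
          rw [div_lt_iff₀ ht]
          have hy2 : y < x₀ + r := hy.2
          calc y - x₀ < r := by linarith
            _ = C_f * s ^ p₁ * t := by rw [hrdef]; ring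
        have h4 : s ^ p₁ ≤ (v y - v x₀) ^ p₁ :=
          Real.rpow_le_rpow hs0.le (by linarith) (by linarith)
        have h5 : C_f * s ^ p₁ ≤ C_f * (v y - v x₀) ^ p₁ :=
          mul_le_mul_of_nonneg_left h4 hCf.le
        linarith
    -- integral lower bound on the interval
    have hIvol : volume (Set.Ioo a b) = ENNReal.ofReal r := by
      rw [Real.volume_Ioo, hab]
    have hconst : IntegrableOn (fun _ : ℝ => s) (Set.Ioo a b) volume := by
      refine integrableOn_const ?_ enorm_ne_top
      rw [hIvol]; exact ENNReal.ofReal_ne_top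
    have h1 : ∫ x in Set.Ioo a b, s ≤ ∫ x in Set.Ioo a b, ‖v x‖ :=
      setIntegral_mono_on hconst hv1.norm.integrableOn measurableSet_Ioo hIb
    have h2 : ∫ _x in Set.Ioo a b, (s : ℝ) = r * s := by
      rw [setIntegral_const, measureReal_def, hIvol, ENNReal.toReal_ofReal hr0.le, smul_eq_mul]
    have h3 : ∫ x in Set.Ioo a b, ‖v x‖ ≤ ∫ x, ‖v x‖ :=
      setIntegral_le_integral hv1.norm
        (Filter.Eventually.of_forall fun x => norm_nonneg _)
    have hrsE : r * s ≤ E := by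
      rw [← h2]; linarith
    -- but r * s > E
    have hss : s ^ p₁ * s = s ^ (p₁ + 1) := by
      rw [Real.rpow_add hs0, Real.rpow_one]
    have hKs : K ^ (p₁ + 1) < s ^ (p₁ + 1) :=
      Real.rpow_lt_rpow hK0.le (by linarith) hp0
    have hgt : E < r * s := by
      have h6 : C_f * t * K ^ (p₁ + 1) < C_f * t * s ^ (p₁ + 1) :=
        mul_lt_mul_of_pos_left hKs hCt
      have h7 : C_f * t * K ^ (p₁ + 1) = E := by
        rw [hK1]; field_simp
      have h8 : r * s = C_f * t * s ^ (p₁ + 1) := by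
        rw [hrdef, ← hss]; ring
      linarith
    linarith
  -- conclude
  have hbd : ∀ᵐ x ∂(volume : Measure ℝ), ‖v x‖ ≤ 4 * K :=
    Filter.Eventually.of_forall fun x => by
      rw [Real.norm_eq_abs]; exact hpt x
  refine ⟨memLp_top_of_bound hv1.aestronglyMeasurable _ hbd, ?_⟩
  rw [eLpNorm_exponent_top]
  exact eLpNormEssSup_le_of_ae_bound hbd
end

section
/- Let K : ℝ∖{0} → ℝ be measurable with |K(x)| ≤ C_K/|x| for all x ≠ 0, let r > 0 and κ > 0, and let g ∈ L²(ℝ) have support contained in the interval [−r,r]. Then for a.e. x ∈ ℝ∖[−r−κ, r+κ] the integral G[g](x) = ∫_ℝ K(x−y) g(y) dy is absolutely convergent (no principal value needed), and ‖G[g]‖_{L²(ℝ∖[−r−κ, r+κ])} ≤ 2C_K · ‖g‖_{L²(ℝ)} · √(r/κ). -/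
open MeasureTheory
open scoped ENNReal

open Set Filter in
lemma int_inv_sq_Ioi {b c : ℝ} (h : b < c) :
    IntegrableOn (fun x => ((x - b)^2)⁻¹) (Set.Ioi c) volume ∧
    ∫ x in Set.Ioi c, ((x - b)^2)⁻¹ = (c - b)⁻¹ := by
  have hderiv : ∀ x ∈ Set.Ici c, HasDerivAt (fun t => -(t - b)⁻¹) (((x - b)^2)⁻¹) x := by
    intro x hx
    have hx0 : x - b ≠ 0 := by
      have := h.trans_le hx
      intro hc
      apply absurd hc
      intro hc
      linarith [sub_eq_zero.mp hc]
    have h1 : HasDerivAt (fun t : ℝ => t - b) 1 x := (hasDerivAt_id x).sub_const b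
    have h2 := (h1.inv hx0).neg
    rw [show ((x - b)^2)⁻¹ = -(-1 / (x - b) ^ 2) by ring]
    exact h2
  have htend : Tendsto (fun t : ℝ => -(t - b)⁻¹) atTop (nhds 0) := by
    have h1 : Tendsto (fun t : ℝ => t - b) atTop atTop :=
      tendsto_atTop_add_const_right _ (-b) tendsto_id
    simpa using (tendsto_inv_atTop_zero.comp h1).neg
  have hint := integrableOn_Ioi_deriv_of_nonneg' hderiv (fun x _ => by positivity) htend
  refine ⟨hint, ?_⟩
  rw [integral_Ioi_of_hasDerivAt_of_tendsto' hderiv hint htend]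
  simp

open Set Filter in
lemma int_inv_sq_Iio {b c : ℝ} (h : b < c) :
    IntegrableOn (fun x => ((-x - b)^2)⁻¹) (Set.Iio (-c)) volume ∧
    ∫ x in Set.Iio (-c), ((-x - b)^2)⁻¹ = (c - b)⁻¹ := by
  obtain ⟨h1, h2⟩ := int_inv_sq_Ioi h
  have hre : (volume : Measure ℝ).restrict (Set.Iio (-c)) = volume.restrict (Set.Iic (-c)) :=
    Measure.restrict_congr_set Iio_ae_eq_Iic
  have hre2 : (volume : Measure ℝ).restrict (Set.Ioi c) = volume.restrict (Set.Ici c) :=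
    Measure.restrict_congr_set Ioi_ae_eq_Ici
  have hmap : (volume : Measure ℝ).restrict (Set.Iic (-c)) =
      Measure.map (fun x : ℝ => -x) (volume.restrict (Set.Ici c)) := by
    conv_lhs => rw [← Measure.map_neg_eq_self (volume : Measure ℝ),
      measurableEmbedding_neg.restrict_map]
    congr 1
    ext x
    simp
  constructor
  · rw [IntegrableOn, hre, hmap, measurableEmbedding_neg.integrable_map_iff]
    have : ((fun x : ℝ => ((-x - b)^2)⁻¹) ∘ (fun x : ℝ => -x)) = fun x : ℝ => ((x - b)^2)⁻¹ := by
      ext x; simp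
    rw [this, ← hre2]
    exact h1
  · rw [hre]
    have := integral_comp_neg_Iic (-c) (fun x : ℝ => ((x - b)^2)⁻¹)
    rw [neg_neg] at this
    rw [show (fun x : ℝ => ((-x - b)^2)⁻¹) = fun x : ℝ => (((-x) - b)^2)⁻¹ from rfl]
    rw [this]
    exact h2

/-- **Tail estimate for the singular convolution of a compactly supported function**
(estimate (2.22)). If `|K(x)| ≤ C_K/|x|` for `x ≠ 0` and `g ∈ L²(ℝ)` has support in
`[-r,r]`, then for a.e. `x` outside `[-r-κ, r+κ]` the integral `G[g](x) = ∫ K(x-y)g(y) dy`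
is absolutely convergent, and
`‖G[g]‖_{L²(ℝ∖[-r-κ,r+κ])} ≤ 2 C_K ‖g‖_{L²(ℝ)} √(r/κ)`. -/
theorem tail_estimate_singular_convolution
    (K : ℝ → ℝ) (C_K : ℝ) (hCK : 0 < C_K) (hKmeas : Measurable K)
    (hKb : ∀ x : ℝ, x ≠ 0 → |K x| ≤ C_K / |x|)
    (r κ : ℝ) (hr : 0 < r) (hκ : 0 < κ)
    (g : ℝ → ℝ) (hg : MemLp g 2 volume)
    (hsupp : Function.support g ⊆ Set.Icc (-r) r) :
    (∀ᵐ x ∂(volume.restrict ((Set.Icc (-(r + κ)) (r + κ))ᶜ)),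
      Integrable (fun y => K (x - y) * g y) volume) ∧
    eLpNorm (fun x => ∫ y : ℝ, K (x - y) * g y) 2
        (volume.restrict ((Set.Icc (-(r + κ)) (r + κ))ᶜ)) ≤
      ENNReal.ofReal (2 * C_K * Real.sqrt (r / κ)) * eLpNorm g 2 volume := by
  have hgm : AEStronglyMeasurable g volume := hg.1
  -- g is integrable
  have hgInt : Integrable g volume := by
    have h1 : IntegrableOn g (Set.Icc (-r) r) volume :=
      (hg.restrict _).integrable one_le_two
    rw [← Set.indicator_eq_self.mpr hsupp]
    exact h1.integrable_indicator measurableSet_Icc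
  set M : ℝ := ∫ y, |g y| with hM
  have hM0 : 0 ≤ M := integral_nonneg fun y => abs_nonneg _
  set a : ℝ := r + κ with ha
  have hra : r < a := by rw [ha]; linarith
  have ha0 : 0 < a := by rw [ha]; linarith
  have hark : a - r = κ := by rw [ha]; ring
  obtain ⟨int_Ioi, val_Ioi⟩ := int_inv_sq_Ioi (b := r) (c := a) hra
  obtain ⟨int_Iio, val_Iio⟩ := int_inv_sq_Iio (b := r) (c := a) hra
  rw [hark] at val_Ioi val_Iio
  -- pointwise bound on the kernel factor
  have hbound : ∀ x : ℝ, a ≤ |x| → ∀ y : ℝ,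
      ‖K (x - y) * g y‖ ≤ (C_K / (|x| - r)) * |g y| := by
    intro x hx y
    have hxr : 0 < |x| - r := by linarith
    by_cases hy : g y = 0
    · simp [hy]
    · have hy' : y ∈ Set.Icc (-r) r := hsupp hy
      have hyabs : |y| ≤ r := abs_le.mpr ⟨hy'.1, hy'.2⟩
      have h1 : |x| - r ≤ |x - y| := by
        have := abs_sub_abs_le_abs_sub x y
        linarith
      have hxy : x - y ≠ 0 := by
        intro hc
        rw [hc, abs_zero] at h1
        linarith
      have h2 : |K (x - y)| ≤ C_K / (|x - y|) := hKb _ hxy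
      have h3 : C_K / |x - y| ≤ C_K / (|x| - r) :=
        div_le_div_of_nonneg_left hCK.le hxr h1
      calc ‖K (x - y) * g y‖ = |K (x - y)| * |g y| := by
            rw [Real.norm_eq_abs, abs_mul]
        _ ≤ (C_K / (|x| - r)) * |g y| :=
            mul_le_mul_of_nonneg_right (h2.trans h3) (abs_nonneg _)
  have hmeas1 : ∀ x : ℝ, AEStronglyMeasurable (fun y => K (x - y) * g y) volume := fun x =>
    ((hKmeas.comp (measurable_const.sub measurable_id)).aestronglyMeasurable).mul hgm
  have int1 : ∀ x : ℝ, a ≤ |x| → Integrable (fun y => K (x - y) * g y) volume := by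
    intro x hx
    refine Integrable.mono ((hgInt.abs).const_mul (C_K / (|x| - r))) (hmeas1 x) ?_
    refine ae_of_all _ fun y => ?_
    have hxr : 0 < |x| - r := by linarith
    have := hbound x hx y
    rwa [Real.norm_eq_abs (C_K / (|x| - r) * |g y|),
      abs_of_nonneg (by positivity : (0:ℝ) ≤ C_K / (|x| - r) * |g y|)]
  have hmem : ∀ x : ℝ, x ∈ (Set.Icc (-a) a)ᶜ → a ≤ |x| := by
    intro x hx
    rcases abs_cases x with ⟨h1, _⟩ | ⟨h1, _⟩ <;>
    · simp only [Set.mem_compl_iff, Set.mem_Icc, not_and_or, not_le] at hx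
      rcases hx with hx | hx <;> [linarith; linarith]
  -- the key pointwise bound on G
  have key : ∀ x : ℝ, a ≤ |x| →
      ‖∫ y : ℝ, K (x - y) * g y‖ ≤ C_K * M / (|x| - r) := by
    intro x hx
    have hxr : 0 < |x| - r := by linarith
    calc ‖∫ y : ℝ, K (x - y) * g y‖ ≤ ∫ y : ℝ, ‖K (x - y) * g y‖ :=
          norm_integral_le_integral_norm _
      _ ≤ ∫ y : ℝ, (C_K / (|x| - r)) * |g y| := by
          refine integral_mono_of_nonneg (ae_of_all _ fun y => norm_nonneg _)
            ((hgInt.abs).const_mul _) (ae_of_all _ fun y => hbound x hx y)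
      _ = (C_K / (|x| - r)) * M := by rw [integral_const_mul]
      _ = C_K * M / (|x| - r) := by ring
  constructor
  · rw [ae_restrict_iff' measurableSet_Icc.compl]
    exact ae_of_all _ fun x hx => int1 x (hmem x hx)
  set G : ℝ → ℝ := fun x => ∫ y : ℝ, K (x - y) * g y with hG
  -- pointwise ENNReal bound
  have hGe : ∀ x : ℝ, a ≤ |x| → (‖G x‖₊ : ℝ≥0∞) ^ (2:ℝ) ≤
      ENNReal.ofReal ((C_K * M)^2 * ((|x| - r)^2)⁻¹) := by
    intro x hx
    have hxr : 0 < |x| - r := by linarith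
    rw [← enorm_eq_nnnorm, ← ofReal_norm]
    calc ENNReal.ofReal ‖G x‖ ^ (2:ℝ)
        ≤ ENNReal.ofReal (C_K * M / (|x| - r)) ^ (2:ℝ) :=
          ENNReal.rpow_le_rpow (ENNReal.ofReal_le_ofReal (key x hx)) (by norm_num)
      _ = ENNReal.ofReal ((C_K * M / (|x| - r)) ^ (2:ℝ)) :=
          ENNReal.ofReal_rpow_of_nonneg (by positivity) (by norm_num)
      _ = ENNReal.ofReal ((C_K * M)^2 * ((|x| - r)^2)⁻¹) := by
          rw [show ((2:ℝ)) = ((2:ℕ):ℝ) by norm_num, Real.rpow_natCast]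
          rw [div_pow, div_eq_mul_inv]
  have piece_Ioi : ∫⁻ x in Set.Ioi a, (‖G x‖₊ : ℝ≥0∞) ^ (2:ℝ) ≤
      ENNReal.ofReal ((C_K * M)^2 * κ⁻¹) := by
    calc ∫⁻ x in Set.Ioi a, (‖G x‖₊ : ℝ≥0∞) ^ (2:ℝ)
        ≤ ∫⁻ x in Set.Ioi a, ENNReal.ofReal ((C_K * M)^2 * ((x - r)^2)⁻¹) := by
          refine lintegral_mono_ae ((ae_restrict_iff' measurableSet_Ioi).mpr
            (ae_of_all _ fun x hx => ?_))
          have hx0 : 0 < x := ha0.trans hx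
          have := hGe x (by rw [abs_of_pos hx0]; exact le_of_lt hx)
          rwa [abs_of_pos hx0] at this
      _ = ENNReal.ofReal (∫ x in Set.Ioi a, (C_K * M)^2 * ((x - r)^2)⁻¹) :=
          (ofReal_integral_eq_lintegral_ofReal (int_Ioi.const_mul _)
            (ae_of_all _ fun x => by positivity)).symm
      _ = ENNReal.ofReal ((C_K * M)^2 * κ⁻¹) := by
          rw [integral_const_mul, val_Ioi]
  have piece_Iio : ∫⁻ x in Set.Iio (-a), (‖G x‖₊ : ℝ≥0∞) ^ (2:ℝ) ≤
      ENNReal.ofReal ((C_K * M)^2 * κ⁻¹) := by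
    calc ∫⁻ x in Set.Iio (-a), (‖G x‖₊ : ℝ≥0∞) ^ (2:ℝ)
        ≤ ∫⁻ x in Set.Iio (-a), ENNReal.ofReal ((C_K * M)^2 * ((-x - r)^2)⁻¹) := by
          refine lintegral_mono_ae ((ae_restrict_iff' measurableSet_Iio).mpr
            (ae_of_all _ fun x hx => ?_))
          have hx0 : x < 0 := hx.trans (by linarith)
          have := hGe x (by rw [abs_of_neg hx0]; linarith [Set.mem_Iio.mp hx])
          rwa [abs_of_neg hx0] at this
      _ = ENNReal.ofReal (∫ x in Set.Iio (-a), (C_K * M)^2 * ((-x - r)^2)⁻¹) :=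
          (ofReal_integral_eq_lintegral_ofReal (int_Iio.const_mul _)
            (ae_of_all _ fun x => by positivity)).symm
      _ = ENNReal.ofReal ((C_K * M)^2 * κ⁻¹) := by
          rw [integral_const_mul, val_Iio]
  have hS : (Set.Icc (-a) a)ᶜ = Set.Iio (-a) ∪ Set.Ioi a := by
    ext x
    simp only [Set.mem_compl_iff, Set.mem_Icc, not_and_or, not_le, Set.mem_union,
      Set.mem_Iio, Set.mem_Ioi]
  have hdisj : Disjoint (Set.Iio (-a)) (Set.Ioi a) := by
    refine Set.disjoint_left.mpr fun x hx hx' => ?_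
    simp only [Set.mem_Iio] at hx
    simp only [Set.mem_Ioi] at hx'
    linarith
  have total : ∫⁻ x in (Set.Icc (-a) a)ᶜ, (‖G x‖₊ : ℝ≥0∞) ^ (2:ℝ) ≤
      ENNReal.ofReal (2 * (C_K * M)^2 * κ⁻¹) := by
    rw [hS, lintegral_union measurableSet_Ioi hdisj]
    calc _ ≤ ENNReal.ofReal ((C_K * M)^2 * κ⁻¹) + ENNReal.ofReal ((C_K * M)^2 * κ⁻¹) :=
          add_le_add piece_Iio piece_Ioi
      _ = ENNReal.ofReal (2 * (C_K * M)^2 * κ⁻¹) := by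
          rw [← ENNReal.ofReal_add (by positivity) (by positivity)]
          congr 1
          ring
  -- Hölder : ofReal M ≤ ‖g‖₂ √(2r)
  have hMle : ENNReal.ofReal M ≤ eLpNorm g 2 volume * ENNReal.ofReal (Real.sqrt (2*r)) := by
    have e1 : ENNReal.ofReal M = eLpNorm g 1 (volume.restrict (Set.Icc (-r) r)) := by
      rw [eLpNorm_one_eq_lintegral_enorm]
      have hMset : M = ∫ y in Set.Icc (-r) r, |g y| := by
        rw [hM]
        exact (setIntegral_eq_integral_of_forall_compl_eq_zero (fun y hy => by
          rw [Function.notMem_support.mp (fun hs => hy (hsupp hs)), abs_zero])).symm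
      rw [hMset, ofReal_integral_eq_lintegral_ofReal hgInt.abs.restrict
        (ae_of_all _ fun y => abs_nonneg _)]
      refine lintegral_congr fun y => ?_
      rw [← Real.norm_eq_abs, ofReal_norm]
    have e2 := eLpNorm_le_eLpNorm_mul_rpow_measure_univ (p := 1) (q := 2)
      (μ := volume.restrict (Set.Icc (-r) r)) one_le_two hgm.restrict
    have e3 : (volume.restrict (Set.Icc (-r) r)) Set.univ = ENNReal.ofReal (2*r) := by
      rw [Measure.restrict_apply_univ, Real.volume_Icc]
      congr 1
      ring
    have e4 : (1/(1:ℝ≥0∞).toReal - 1/(2:ℝ≥0∞).toReal) = (1/2:ℝ) := by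
      norm_num
    rw [e1]
    refine e2.trans ?_
    rw [e3, e4, ENNReal.ofReal_rpow_of_nonneg (by positivity) (by norm_num),
      ← Real.sqrt_eq_rpow]
    exact mul_le_mul_left (eLpNorm_mono_measure _ Measure.restrict_le_self) _
  -- put together
  have hE : eLpNorm G 2 (volume.restrict ((Set.Icc (-a) a)ᶜ)) =
      (∫⁻ x in (Set.Icc (-a) a)ᶜ, (‖G x‖₊ : ℝ≥0∞) ^ (2:ℝ)) ^ (1/2:ℝ) := by
    rw [eLpNorm_eq_lintegral_rpow_enorm_toReal two_ne_zero ENNReal.ofNat_ne_top]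
    simp only [enorm_eq_nnnorm]
    norm_num
  calc eLpNorm G 2 (volume.restrict ((Set.Icc (-a) a)ᶜ))
      = (∫⁻ x in (Set.Icc (-a) a)ᶜ, (‖G x‖₊ : ℝ≥0∞) ^ (2:ℝ)) ^ (1/2:ℝ) := hE
    _ ≤ (ENNReal.ofReal (2 * (C_K * M)^2 * κ⁻¹)) ^ (1/2:ℝ) :=
        ENNReal.rpow_le_rpow total (by norm_num)
    _ = ENNReal.ofReal ((2 * (C_K * M)^2 * κ⁻¹) ^ (1/2:ℝ)) :=
        ENNReal.ofReal_rpow_of_nonneg (by positivity) (by norm_num)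
    _ = ENNReal.ofReal (C_K * Real.sqrt (2/κ) * M) := by
        rw [← Real.sqrt_eq_rpow]
        congr 1
        rw [show 2 * (C_K * M)^2 * κ⁻¹ = (C_K * M)^2 * (2/κ) by ring,
          Real.sqrt_mul (sq_nonneg _), Real.sqrt_sq (by positivity)]
        ring
    _ = ENNReal.ofReal (C_K * Real.sqrt (2/κ)) * ENNReal.ofReal M :=
        ENNReal.ofReal_mul (by positivity)
    _ ≤ ENNReal.ofReal (C_K * Real.sqrt (2/κ)) *
        (eLpNorm g 2 volume * ENNReal.ofReal (Real.sqrt (2*r))) :=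
        mul_le_mul_right hMle _
    _ = (ENNReal.ofReal (C_K * Real.sqrt (2/κ)) * ENNReal.ofReal (Real.sqrt (2*r))) *
        eLpNorm g 2 volume := by ring
    _ = ENNReal.ofReal (C_K * Real.sqrt (2/κ) * Real.sqrt (2*r)) * eLpNorm g 2 volume := by
        rw [← ENNReal.ofReal_mul (by positivity)]
    _ = ENNReal.ofReal (2 * C_K * Real.sqrt (r / κ)) * eLpNorm g 2 volume := by
        congr 2
        rw [mul_assoc, ← Real.sqrt_mul (by positivity) (2*r),
          show (2/κ) * (2*r) = 2^2 * (r/κ) by field_simp,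
          Real.sqrt_mul (by positivity), Real.sqrt_sq (by norm_num)]
        ring
end

section
/- Let P > 0 and let K be an odd 2P-periodic function, locally integrable on ℝ∖2Pℤ, with |K(x)| ≤ C/|x| for x ∈ [−P,P]∖{0}. Let [a,b] ⊆ [−P,P] and let χ_{[a,b]} denote the characteristic function of [a,b], extended to all of ℝ by 2P-periodicity. Then ‖G_per[χ_{[a,b]}]‖_{L¹([−P,P])} ≤ C·(b−a)·( 2 + 5 ln 2 + 2 ln P − 2 ln(b−a) ). -/
open MeasureTheory Filter Topology
open scoped ENNReal

noncomputable section

/-- The principal value of the periodic singular convolution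
`∫_{(-P,P)} K(y) g(x-y) dy` at the point `x` equals `L`. -/
def PVPerAt (K g : ℝ → ℝ) (P x L : ℝ) : Prop :=
  Tendsto (fun ε : ℝ => ∫ y in Set.Ioo (-P) P \ Set.Ioo (-ε) ε, K y * g (x - y))
    (𝓝[>] 0) (𝓝 L)

/-- The characteristic function of `[a,b]`, extended to all of `ℝ` by `2P`-periodicity. -/
def perIndicator (P a b : ℝ) : ℝ → ℝ :=
  Set.indicator {x : ℝ | ∃ k : ℤ, x - 2 * k * P ∈ Set.Icc a b} fun _ => (1 : ℝ)

def perSet (P c d : ℝ) : Set ℝ := ⋃ k : ℤ, Set.Icc (c + 2*(k:ℝ)*P) (d + 2*(k:ℝ)*P)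

lemma perSet_measurable (P c d : ℝ) : MeasurableSet (perSet P c d) :=
  MeasurableSet.iUnion fun _ => measurableSet_Icc

lemma mem_perSet {P c d x : ℝ} :
    x ∈ perSet P c d ↔ ∃ k : ℤ, c + 2*(k:ℝ)*P ≤ x ∧ x ≤ d + 2*(k:ℝ)*P := by
  simp [perSet, Set.mem_iUnion, Set.mem_Icc]

lemma indicator_shift (P c d x y : ℝ) :
    (perSet P c d).indicator (fun _ => (1:ℝ)) (x - y)
      = (perSet P (c+y) (d+y)).indicator (fun _ => (1:ℝ)) x := by
  have hmem : x - y ∈ perSet P c d ↔ x ∈ perSet P (c+y) (d+y) := by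
    rw [mem_perSet, mem_perSet]
    constructor
    · rintro ⟨k, h1, h2⟩; exact ⟨k, by linarith, by linarith⟩
    · rintro ⟨k, h1, h2⟩; exact ⟨k, by linarith, by linarith⟩
  by_cases hx : x - y ∈ perSet P c d
  · rw [Set.indicator_of_mem hx, Set.indicator_of_mem (hmem.mp hx)]
  · rw [Set.indicator_of_notMem hx, Set.indicator_of_notMem (fun h => hx (hmem.mpr h))]

lemma meas_perSet_window {P : ℝ} (hP : 0 < P) (c d : ℝ) :
    volume (perSet P c d ∩ Set.Icc (-P) P) ≤ ENNReal.ofReal (d - c) := by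
  unfold perSet
  rw [Set.iUnion_inter]
  refine le_trans (measure_iUnion_le _) ?_
  have hterm : ∀ k : ℤ,
      volume (Set.Icc (c + 2*(k:ℝ)*P) (d + 2*(k:ℝ)*P) ∩ Set.Icc (-P) P)
        ≤ volume (Set.Icc c d ∩ Set.Ioc ((2*(-(k:ℝ))-1)*P) ((2*(-(k:ℝ))+1)*P)) := by
    intro k
    have ht : volume (Set.Icc (c + 2*(k:ℝ)*P) (d + 2*(k:ℝ)*P) ∩ Set.Icc (-P) P)
        = volume (Set.Icc c d ∩ Set.Icc ((2*(-(k:ℝ))-1)*P) ((2*(-(k:ℝ))+1)*P)) := by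
      rw [← measure_preimage_add volume (2*(k:ℝ)*P)
        (Set.Icc (c + 2*(k:ℝ)*P) (d + 2*(k:ℝ)*P) ∩ Set.Icc (-P) P)]
      congr 1
      ext x
      simp only [Set.mem_preimage, Set.mem_inter_iff, Set.mem_Icc]
      constructor
      · rintro ⟨⟨h1, h2⟩, h3, h4⟩
        exact ⟨⟨by linarith, by linarith⟩, by linarith, by linarith⟩
      · rintro ⟨⟨h1, h2⟩, h3, h4⟩
        exact ⟨⟨by linarith, by linarith⟩, by linarith, by linarith⟩
    rw [ht]
    have hsub : Set.Icc c d ∩ Set.Icc ((2*(-(k:ℝ))-1)*P) ((2*(-(k:ℝ))+1)*P)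
        ⊆ (Set.Icc c d ∩ Set.Ioc ((2*(-(k:ℝ))-1)*P) ((2*(-(k:ℝ))+1)*P)) ∪ {(2*(-(k:ℝ))-1)*P} := by
      rintro x ⟨hx1, hx2, hx3⟩
      rcases eq_or_lt_of_le hx2 with h | h
      · exact Or.inr (by simp [← h])
      · exact Or.inl ⟨hx1, h, hx3⟩
    calc volume (Set.Icc c d ∩ Set.Icc ((2*(-(k:ℝ))-1)*P) ((2*(-(k:ℝ))+1)*P))
        ≤ volume ((Set.Icc c d ∩ Set.Ioc ((2*(-(k:ℝ))-1)*P) ((2*(-(k:ℝ))+1)*P)) ∪ {(2*(-(k:ℝ))-1)*P}) :=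
          measure_mono hsub
      _ ≤ volume (Set.Icc c d ∩ Set.Ioc ((2*(-(k:ℝ))-1)*P) ((2*(-(k:ℝ))+1)*P)) + volume {(2*(-(k:ℝ))-1)*P} :=
          measure_union_le _ _
      _ = volume (Set.Icc c d ∩ Set.Ioc ((2*(-(k:ℝ))-1)*P) ((2*(-(k:ℝ))+1)*P)) := by
          simp [Real.volume_singleton]
  refine le_trans (ENNReal.tsum_le_tsum hterm) ?_
  have hre : ∑' k : ℤ, volume (Set.Icc c d ∩ Set.Ioc ((2*(-(k:ℝ))-1)*P) ((2*(-(k:ℝ))+1)*P))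
      = ∑' k : ℤ, volume (Set.Icc c d ∩ Set.Ioc ((2*((k:ℝ))-1)*P) ((2*((k:ℝ))+1)*P)) := by
    refine ((Equiv.neg ℤ).tsum_eq _).symm.trans ?_
    simp
  rw [hre]
  have hdisj : Pairwise (Function.onFun Disjoint
      fun k : ℤ => Set.Icc c d ∩ Set.Ioc ((2*((k:ℝ))-1)*P) ((2*((k:ℝ))+1)*P)) := by
    intro i j hij
    have : Disjoint (Set.Ioc ((2*((i:ℝ))-1)*P) ((2*((i:ℝ))+1)*P))
        (Set.Ioc ((2*((j:ℝ))-1)*P) ((2*((j:ℝ))+1)*P)) := by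
      rw [Set.Ioc_disjoint_Ioc]
      rcases hij.lt_or_gt with h | h
      · have : (i:ℝ) + 1 ≤ j := by exact_mod_cast h
        refine le_trans (inf_le_left) (le_trans ?_ le_sup_right)
        nlinarith
      · have : (j:ℝ) + 1 ≤ i := by exact_mod_cast h
        refine le_trans (inf_le_right) (le_trans ?_ le_sup_left)
        nlinarith
    exact (this.mono (Set.inter_subset_right) (Set.inter_subset_right))
  rw [← measure_iUnion hdisj (fun k => (measurableSet_Icc.inter measurableSet_Ioc))]
  refine le_trans (measure_mono ?_) (le_of_eq Real.volume_Icc)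
  exact Set.iUnion_subset fun k => Set.inter_subset_left

-- pointwise bound by boundary indicators
lemma diff_le_boundary (P a b x y : ℝ) (hy : 0 < y) :
    |(perSet P a b).indicator (fun _ => (1:ℝ)) (x - y)
      - (perSet P a b).indicator (fun _ => (1:ℝ)) (x + y)|
    ≤ (perSet P (a-y) (a+y)).indicator (fun _ => (1:ℝ)) x
      + (perSet P (b-y) (b+y)).indicator (fun _ => (1:ℝ)) x := by
  have hnn : ∀ (s : Set ℝ) (t : ℝ), (0:ℝ) ≤ s.indicator (fun _ => (1:ℝ)) t :=
    fun s t => Set.indicator_nonneg (fun _ _ => zero_le_one) t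
  by_cases h1 : x - y ∈ perSet P a b <;> by_cases h2 : x + y ∈ perSet P a b
  · rw [Set.indicator_of_mem h1, Set.indicator_of_mem h2]
    simpa using add_nonneg (hnn _ x) (hnn _ x)
  · -- x - y ∈, x + y ∉ : x near a right-translate of b
    rw [Set.indicator_of_mem h1, Set.indicator_of_notMem h2]
    obtain ⟨k, hk1, hk2⟩ := mem_perSet.mp h1
    have hxb : x ∈ perSet P (b-y) (b+y) := by
      rw [mem_perSet]
      refine ⟨k, ?_, by linarith⟩
      by_contra hcon
      push_neg at hcon
      exact h2 (mem_perSet.mpr ⟨k, by linarith, by linarith⟩)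
    rw [Set.indicator_of_mem hxb]
    have := hnn (perSet P (a-y) (a+y)) x
    rw [abs_of_nonneg (by norm_num)]
    linarith
  · rw [Set.indicator_of_notMem h1, Set.indicator_of_mem h2]
    obtain ⟨k, hk1, hk2⟩ := mem_perSet.mp h2
    have hxa : x ∈ perSet P (a-y) (a+y) := by
      rw [mem_perSet]
      refine ⟨k, by linarith, ?_⟩
      by_contra hcon
      push_neg at hcon
      exact h1 (mem_perSet.mpr ⟨k, by linarith, by linarith⟩)
    rw [Set.indicator_of_mem hxa]
    have := hnn (perSet P (b-y) (b+y)) x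
    rw [abs_of_nonpos (by norm_num)]
    norm_num
    linarith
  · rw [Set.indicator_of_notMem h1, Set.indicator_of_notMem h2]
    simpa using add_nonneg (hnn _ x) (hnn _ x)

-- lintegral of a perSet indicator over the window
lemma lint_ind (P : ℝ) (hP : 0 < P) (c d : ℝ) :
    ∫⁻ x in Set.Icc (-P) P, ENNReal.ofReal ((perSet P c d).indicator (fun _ => (1:ℝ)) x)
      ≤ ENNReal.ofReal (d - c) := by
  have heq : ∀ x, ENNReal.ofReal ((perSet P c d).indicator (fun _ => (1:ℝ)) x)
      = (perSet P c d).indicator (fun _ => (1:ℝ≥0∞)) x := by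
    intro x
    by_cases hx : x ∈ perSet P c d <;> simp [hx]
  calc ∫⁻ x in Set.Icc (-P) P, ENNReal.ofReal ((perSet P c d).indicator (fun _ => (1:ℝ)) x)
      = ∫⁻ x in Set.Icc (-P) P, (perSet P c d).indicator (fun _ => (1:ℝ≥0∞)) x :=
        lintegral_congr heq
    _ = volume (perSet P c d ∩ Set.Icc (-P) P) := by
        rw [lintegral_indicator (perSet_measurable P c d)]
        simp [Measure.restrict_restrict (perSet_measurable P c d)]
    _ ≤ ENNReal.ofReal (d - c) := meas_perSet_window hP c d

lemma lint_diff_le (P a b : ℝ) (hP : 0 < P) (hab : a ≤ b) {y : ℝ} (hy : 0 < y) :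
    ∫⁻ x in Set.Icc (-P) P,
        ENNReal.ofReal |(perSet P a b).indicator (fun _ => (1:ℝ)) (x - y)
          - (perSet P a b).indicator (fun _ => (1:ℝ)) (x + y)|
      ≤ ENNReal.ofReal (min (4*y) (2*(b-a))) := by
  have hnn : ∀ (s : Set ℝ) (t : ℝ), (0:ℝ) ≤ s.indicator (fun _ => (1:ℝ)) t :=
    fun s t => Set.indicator_nonneg (fun _ _ => zero_le_one) t
  have hmeas : ∀ c d : ℝ, Measurable fun x =>
      ENNReal.ofReal ((perSet P c d).indicator (fun _ => (1:ℝ)) x) :=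
    fun c d => ENNReal.measurable_ofReal.comp
      ((measurable_const.indicator (perSet_measurable P c d)))
  have h4y : ∫⁻ x in Set.Icc (-P) P,
      ENNReal.ofReal |(perSet P a b).indicator (fun _ => (1:ℝ)) (x - y)
        - (perSet P a b).indicator (fun _ => (1:ℝ)) (x + y)|
      ≤ ENNReal.ofReal (4*y) := by
    calc ∫⁻ x in Set.Icc (-P) P, ENNReal.ofReal |(perSet P a b).indicator (fun _ => (1:ℝ)) (x - y)
        - (perSet P a b).indicator (fun _ => (1:ℝ)) (x + y)|
        ≤ ∫⁻ x in Set.Icc (-P) P,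
            (ENNReal.ofReal ((perSet P (a-y) (a+y)).indicator (fun _ => (1:ℝ)) x)
            + ENNReal.ofReal ((perSet P (b-y) (b+y)).indicator (fun _ => (1:ℝ)) x)) := by
          refine lintegral_mono fun x => ?_
          rw [← ENNReal.ofReal_add (hnn _ _) (hnn _ _)]
          exact ENNReal.ofReal_le_ofReal (diff_le_boundary P a b x y hy)
      _ = (∫⁻ x in Set.Icc (-P) P, ENNReal.ofReal ((perSet P (a-y) (a+y)).indicator (fun _ => (1:ℝ)) x))
          + ∫⁻ x in Set.Icc (-P) P, ENNReal.ofReal ((perSet P (b-y) (b+y)).indicator (fun _ => (1:ℝ)) x) :=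
          lintegral_add_left ((hmeas _ _)) _
      _ ≤ ENNReal.ofReal ((a+y) - (a-y)) + ENNReal.ofReal ((b+y) - (b-y)) :=
          add_le_add (lint_ind P hP _ _) (lint_ind P hP _ _)
      _ = ENNReal.ofReal (4*y) := by
          rw [← ENNReal.ofReal_add (by linarith) (by linarith)]
          ring_nf
  have h2L : ∫⁻ x in Set.Icc (-P) P,
      ENNReal.ofReal |(perSet P a b).indicator (fun _ => (1:ℝ)) (x - y)
        - (perSet P a b).indicator (fun _ => (1:ℝ)) (x + y)|
      ≤ ENNReal.ofReal (2*(b-a)) := by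
    calc ∫⁻ x in Set.Icc (-P) P, ENNReal.ofReal |(perSet P a b).indicator (fun _ => (1:ℝ)) (x - y)
        - (perSet P a b).indicator (fun _ => (1:ℝ)) (x + y)|
        ≤ ∫⁻ x in Set.Icc (-P) P,
            (ENNReal.ofReal ((perSet P (a+y) (b+y)).indicator (fun _ => (1:ℝ)) x)
            + ENNReal.ofReal ((perSet P (a-y) (b-y)).indicator (fun _ => (1:ℝ)) x)) := by
          refine lintegral_mono fun x => ?_
          rw [← ENNReal.ofReal_add (hnn _ _) (hnn _ _)]
          refine ENNReal.ofReal_le_ofReal ?_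
          have e1 : (perSet P a b).indicator (fun _ => (1:ℝ)) (x - y)
              = (perSet P (a+y) (b+y)).indicator (fun _ => (1:ℝ)) x := indicator_shift P a b x y
          have e2 : (perSet P a b).indicator (fun _ => (1:ℝ)) (x + y)
              = (perSet P (a-y) (b-y)).indicator (fun _ => (1:ℝ)) x := by
            have := indicator_shift P a b x (-y)
            simpa [sub_neg_eq_add, ← sub_eq_add_neg] using this
          rw [e1, e2]
          refine le_trans (abs_sub _ _) ?_
          rw [abs_of_nonneg (hnn _ _), abs_of_nonneg (hnn _ _)]
      _ = (∫⁻ x in Set.Icc (-P) P, ENNReal.ofReal ((perSet P (a+y) (b+y)).indicator (fun _ => (1:ℝ)) x))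
          + ∫⁻ x in Set.Icc (-P) P, ENNReal.ofReal ((perSet P (a-y) (b-y)).indicator (fun _ => (1:ℝ)) x) :=
          lintegral_add_left ((hmeas _ _)) _
      _ ≤ ENNReal.ofReal ((b+y) - (a+y)) + ENNReal.ofReal ((b-y) - (a-y)) :=
          add_le_add (lint_ind P hP _ _) (lint_ind P hP _ _)
      _ = ENNReal.ofReal (2*(b-a)) := by
          rw [← ENNReal.ofReal_add (by linarith) (by linarith)]
          ring_nf
  rcases le_total (4*y) (2*(b-a)) with h | h
  · rw [min_eq_left h]; exact h4y
  · rw [min_eq_right h]; exact h2L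

lemma calc_int {P C L : ℝ} (hP : 0 < P) (hC : 0 < C) (hL : 0 < L) (hL2 : L ≤ 2*P) :
    ∫ y in Set.Ioo (0:ℝ) P, (C/y) * min (4*y) (2*L)
      = C*L*(2 + 2*Real.log 2 + 2*Real.log P - 2*Real.log L) := by
  have hL2' : L/2 ≤ P := by linarith
  have hLpos : 0 < L/2 := by linarith
  set f : ℝ → ℝ := fun y => (C/y) * min (4*y) (2*L) with hf
  have heq1 : Set.EqOn (fun _ : ℝ => 4*C) f (Set.Ioc 0 (L/2)) := by
    intro y hy
    obtain ⟨hy1, hy2⟩ := hy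
    simp only [hf]
    rw [min_eq_left (by linarith)]
    field_simp
  have heq2 : Set.EqOn (fun y : ℝ => (2*C*L) * (1/y)) f (Set.Ioc (L/2) P) := by
    intro y hy
    obtain ⟨hy1, hy2⟩ := hy
    simp only [hf]
    rw [min_eq_right (by linarith)]
    have : y ≠ 0 := by linarith
    field_simp
  have hi1 : IntegrableOn f (Set.Ioc 0 (L/2)) :=
    (integrableOn_const (C := 4*C) measure_Ioc_lt_top.ne).congr_fun heq1
      measurableSet_Ioc
  have hi2 : IntegrableOn f (Set.Ioc (L/2) P) := by
    refine IntegrableOn.congr_fun ?_ heq2 measurableSet_Ioc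
    refine IntegrableOn.mono_set ?_ Set.Ioc_subset_Icc_self
    refine ContinuousOn.integrableOn_Icc ?_
    refine ContinuousOn.mul continuousOn_const ?_
    refine ContinuousOn.div continuousOn_const continuousOn_id ?_
    intro y hy
    obtain ⟨hy1, _⟩ := hy
    exact ne_of_gt (lt_of_lt_of_le hLpos hy1)
  have e1 : ∫ y in Set.Ioc (0:ℝ) (L/2), f y = 2*C*L := by
    rw [← setIntegral_congr_fun measurableSet_Ioc heq1]
    rw [setIntegral_const]
    simp [Real.volume_Ioc]
    rw [max_eq_left (by linarith)]
    ring
  have e2 : ∫ y in Set.Ioc (L/2) P, f y = 2*C*L*(Real.log P - Real.log L + Real.log 2) := by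
    rw [← setIntegral_congr_fun measurableSet_Ioc heq2]
    rw [← intervalIntegral.integral_of_le hL2']
    rw [intervalIntegral.integral_const_mul]
    rw [integral_one_div]
    · rw [Real.log_div (ne_of_gt hP) (ne_of_gt hLpos), Real.log_div (ne_of_gt hL) (by norm_num)]
      ring
    · intro hmem
      rw [Set.uIcc_of_le hL2'] at hmem
      obtain ⟨h1, _⟩ := hmem
      linarith
  have hIoo : ∫ y in Set.Ioo (0:ℝ) P, f y = ∫ y in Set.Ioc (0:ℝ) P, f y :=
    setIntegral_congr_set Ioo_ae_eq_Ioc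
  rw [hIoo, ← Set.Ioc_union_Ioc_eq_Ioc (le_of_lt hLpos) hL2',
    setIntegral_union (Set.Ioc_disjoint_Ioc_of_le le_rfl) measurableSet_Ioc hi1 hi2, e1, e2]
  ring

lemma good_point {P : ℝ} (hP : 0 < P) (a b x : ℝ)
    (hx : ∀ k : ℤ, x ≠ a + 2*(k:ℝ)*P ∧ x ≠ b + 2*(k:ℝ)*P) :
    ∃ δ > 0, ∀ y : ℝ, 0 < y → y < δ →
      (perSet P a b).indicator (fun _ => (1:ℝ)) (x - y)
        = (perSet P a b).indicator (fun _ => (1:ℝ)) (x + y) := by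
  by_cases hmem : x ∈ perSet P a b
  · obtain ⟨k, hk1, hk2⟩ := mem_perSet.mp hmem
    have h1 : a + 2*(k:ℝ)*P < x := lt_of_le_of_ne hk1 (Ne.symm (hx k).1)
    have h2 : x < b + 2*(k:ℝ)*P := lt_of_le_of_ne hk2 (hx k).2
    refine ⟨min (x - (a + 2*(k:ℝ)*P)) ((b + 2*(k:ℝ)*P) - x), lt_min (by linarith) (by linarith), ?_⟩
    intro y hy0 hyδ
    have hyd1 : y < x - (a + 2*(k:ℝ)*P) := lt_of_lt_of_le hyδ (min_le_left _ _)
    have hyd2 : y < (b + 2*(k:ℝ)*P) - x := lt_of_lt_of_le hyδ (min_le_right _ _)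
    have hm1 : x - y ∈ perSet P a b := mem_perSet.mpr ⟨k, by linarith, by linarith⟩
    have hm2 : x + y ∈ perSet P a b := mem_perSet.mpr ⟨k, by linarith, by linarith⟩
    rw [Set.indicator_of_mem hm1, Set.indicator_of_mem hm2]
  · set m₁ : ℤ := ⌈(x - 1 - b)/(2*P)⌉ with hm₁
    set m₂ : ℤ := ⌊(x + 1 - a)/(2*P)⌋ with hm₂
    set F : Finset ℝ := insert (1:ℝ)
      ((Finset.Icc m₁ m₂).image (fun k : ℤ => min |x - (a + 2*(k:ℝ)*P)| |x - (b + 2*(k:ℝ)*P)|))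
      with hF
    have hFne : F.Nonempty := ⟨1, Finset.mem_insert_self _ _⟩
    set δ := F.min' hFne with hδ
    have hδpos : 0 < δ := by
      rw [hδ, Finset.lt_min'_iff]
      intro z hz
      rw [hF, Finset.mem_insert] at hz
      rcases hz with hz | hz
      · rw [hz]; norm_num
      · obtain ⟨k, _, hk⟩ := Finset.mem_image.mp hz
        rw [← hk]
        have n1 : x - (a + 2*(k:ℝ)*P) ≠ 0 := sub_ne_zero.mpr (hx k).1
        have n2 : x - (b + 2*(k:ℝ)*P) ≠ 0 := sub_ne_zero.mpr (hx k).2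
        exact lt_min (abs_pos.mpr n1) (abs_pos.mpr n2)
    have hδ1 : δ ≤ 1 := Finset.min'_le _ _ (Finset.mem_insert_self _ _)
    have hout : ∀ t : ℝ, |t - x| < δ → t ∉ perSet P a b := by
      intro t ht htmem
      obtain ⟨k, hk1, hk2⟩ := mem_perSet.mp htmem
      have habs1 : t ≤ x + 1 := by
        have := (abs_lt.mp ht).2
        linarith
      have habs2 : x - 1 ≤ t := by
        have := (abs_lt.mp ht).1
        linarith
      have hk_le : k ≤ m₂ := by
        rw [hm₂, Int.le_floor]
        rw [le_div_iff₀ (by linarith : (0:ℝ) < 2*P)]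
        push_cast
        linarith
      have hk_ge : m₁ ≤ k := by
        rw [hm₁, Int.ceil_le]
        rw [div_le_iff₀ (by linarith : (0:ℝ) < 2*P)]
        push_cast
        linarith
      have hmemF : min |x - (a + 2*(k:ℝ)*P)| |x - (b + 2*(k:ℝ)*P)| ∈ F := by
        rw [hF, Finset.mem_insert]
        exact Or.inr (Finset.mem_image.mpr ⟨k, Finset.mem_Icc.mpr ⟨hk_ge, hk_le⟩, rfl⟩)
      have hδle : δ ≤ min |x - (a + 2*(k:ℝ)*P)| |x - (b + 2*(k:ℝ)*P)| := Finset.min'_le _ _ hmemF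
      have hxnot : x ∉ Set.Icc (a + 2*(k:ℝ)*P) (b + 2*(k:ℝ)*P) := by
        intro hxm
        exact hmem (mem_perSet.mpr ⟨k, hxm.1, hxm.2⟩)
      rw [Set.mem_Icc, not_and_or, not_le, not_le] at hxnot
      rcases hxnot with hlt | hgt
      · have : |x - (a + 2*(k:ℝ)*P)| = (a + 2*(k:ℝ)*P) - x := by
          rw [abs_of_nonpos (by linarith)]; ring
        have h3 : δ ≤ (a + 2*(k:ℝ)*P) - x := by
          rw [this] at hδle
          exact le_trans hδle (min_le_left _ _)
        have := (abs_lt.mp ht).2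
        linarith
      · have : |x - (b + 2*(k:ℝ)*P)| = x - (b + 2*(k:ℝ)*P) := abs_of_nonneg (by linarith)
        have h3 : δ ≤ x - (b + 2*(k:ℝ)*P) := by
          rw [min_comm] at hδle
          rw [this] at hδle
          exact le_trans hδle (min_le_left _ _)
        have := (abs_lt.mp ht).1
        linarith
    refine ⟨δ, hδpos, ?_⟩
    intro y hy0 hyδ
    have hn1 : x - y ∉ perSet P a b := hout _ (by rw [abs_of_nonpos (by linarith)]; simpa using by linarith)
    have hn2 : x + y ∉ perSet P a b := hout _ (by rw [abs_of_nonneg (by linarith)]; simpa using by linarith)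
    rw [Set.indicator_of_notMem hn1, Set.indicator_of_notMem hn2]

set_option maxHeartbeats 1000000 in
/-- **Logarithmic `L¹` bound for the periodic singular convolution of a characteristic
function** (estimate (3.6)). Let `K` be odd, `2P`-periodic with `|K(x)| ≤ C/|x|` on
`[-P,P]∖{0}` and let `[a,b] ⊆ [-P,P]`. Then
`‖G_per[χ_{[a,b]}]‖_{L¹([-P,P])} ≤ C (b-a)(2 + 5 ln 2 + 2 ln P - 2 ln(b-a))`. -/
theorem periodic_indicator_L1_bound
    (P C : ℝ) (hP : 0 < P) (hC : 0 < C)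
    (K : ℝ → ℝ) (hKmeas : Measurable K)
    (hKper : Function.Periodic K (2 * P))
    (hKodd : ∀ x : ℝ, K (-x) = -K x)
    (hKb : ∀ x ∈ Set.Icc (-P) P, x ≠ 0 → |K x| ≤ C / |x|)
    (a b : ℝ) (hab : a ≤ b) (ha : -P ≤ a) (hb : b ≤ P) :
    ∃ Gg : ℝ → ℝ,
      (∀ᵐ x ∂volume, PVPerAt K (perIndicator P a b) P x (Gg x)) ∧
      IntegrableOn Gg (Set.Icc (-P) P) ∧
      ∫ x in Set.Icc (-P) P, |Gg x| ≤
        C * (b - a) * (2 + 5 * Real.log 2 + 2 * Real.log P - 2 * Real.log (b - a)) := by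
  set g : ℝ → ℝ := (perSet P a b).indicator (fun _ => (1:ℝ)) with hg
  have hsets : {x : ℝ | ∃ k : ℤ, x - 2 * k * P ∈ Set.Icc a b} = perSet P a b := by
    ext x
    simp only [Set.mem_setOf_eq, Set.mem_Icc, mem_perSet]
    constructor
    · rintro ⟨k, h1, h2⟩; exact ⟨k, by linarith, by linarith⟩
    · rintro ⟨k, h1, h2⟩; exact ⟨k, by linarith, by linarith⟩
  have hper : perIndicator P a b = g := by
    rw [hg]
    unfold perIndicator
    rw [hsets]
  have hgmeas : Measurable g := measurable_const.indicator (perSet_measurable P a b)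
  have hgbd : ∀ t, |g t| ≤ 1 := by
    intro t
    rw [hg]
    by_cases ht : t ∈ perSet P a b
    · rw [Set.indicator_of_mem ht]; norm_num
    · rw [Set.indicator_of_notMem ht]; norm_num
  set φ : ℝ → ℝ → ℝ := fun x y => K y * (g (x - y) - g (x + y)) with hφ
  have hφmeas : ∀ x, Measurable (φ x) := by
    intro x
    exact hKmeas.mul (((hgmeas.comp (measurable_const.sub measurable_id)).sub
      (hgmeas.comp (measurable_const.add measurable_id))))
  set Gg : ℝ → ℝ := fun x => ∫ y in Set.Ioo (0:ℝ) P, φ x y with hGg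
  have hGgm : StronglyMeasurable Gg := by
    rw [hGg]
    refine StronglyMeasurable.integral_prod_right ?_
    refine Measurable.stronglyMeasurable ?_
    refine (hKmeas.comp measurable_snd).mul ?_
    exact ((hgmeas.comp (measurable_fst.sub measurable_snd)).sub
      (hgmeas.comp (measurable_fst.add measurable_snd)))
  -- helper integrability
  have hbdd : ∀ (f : ℝ → ℝ), Measurable f → (∀ t, |f t| ≤ 2) →
      ∀ (s : Set ℝ) (ε : ℝ), 0 < ε → MeasurableSet s → s ⊆ Set.Icc (-P) P →
      (∀ y ∈ s, ε ≤ |y|) → IntegrableOn (fun y => K y * f y) s volume := by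
    intro f hf hfb s ε hε hs hsub hge
    refine Measure.integrableOn_of_bounded (M := (C/ε)*2) ?_ ?_ ?_
    · refine ne_of_lt (lt_of_le_of_lt (measure_mono hsub) ?_)
      rw [Real.volume_Icc]
      exact ENNReal.ofReal_lt_top
    · exact (hKmeas.mul hf).aestronglyMeasurable
    · refine (ae_restrict_iff' hs).mpr (ae_of_all _ ?_)
      intro y hy
      have hyI : y ∈ Set.Icc (-P) P := hsub hy
      have hyge : ε ≤ |y| := hge y hy
      have hyne : y ≠ 0 := by
        intro h; rw [h] at hyge; simp at hyge; linarith
      have h1 : |K y| ≤ C / |y| := hKb y hyI hyne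
      have h2 : C / |y| ≤ C / ε := by
        apply div_le_div_of_nonneg_left hC.le hε hyge
      rw [Real.norm_eq_abs, abs_mul]
      have habs : (0:ℝ) ≤ |f y| := abs_nonneg _
      calc |K y| * |f y| ≤ (C/ε) * |f y| :=
            mul_le_mul_of_nonneg_right (le_trans h1 h2) habs
        _ ≤ (C/ε) * 2 := by
            refine mul_le_mul_of_nonneg_left (hfb y) ?_
            positivity
  -- PART 1 : a.e. principal value
  have hae : ∀ᵐ x ∂volume, PVPerAt K (perIndicator P a b) P x (Gg x) := by
    have hBad : volume (⋃ k : ℤ, ({a + 2*(k:ℝ)*P, b + 2*(k:ℝ)*P} : Set ℝ)) = 0 := by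
      refine Set.Countable.measure_zero ?_ _
      exact Set.countable_iUnion fun k => (Set.countable_singleton _).insert _
    have hae0 : ∀ᵐ x ∂volume, x ∉ (⋃ k : ℤ, ({a + 2*(k:ℝ)*P, b + 2*(k:ℝ)*P} : Set ℝ)) :=
      measure_eq_zero_iff_ae_notMem.mp hBad
    filter_upwards [hae0] with x hx
    have hx' : ∀ k : ℤ, x ≠ a + 2*(k:ℝ)*P ∧ x ≠ b + 2*(k:ℝ)*P := by
      intro k
      constructor <;> intro h <;> exact hx (Set.mem_iUnion.mpr ⟨k, by simp [h]⟩)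
    obtain ⟨δ, hδpos, hδ⟩ := good_point hP a b x hx'
    set δ' : ℝ := min δ P with hδ'
    have hδ'pos : 0 < δ' := lt_min hδpos hP
    have hδ'P : δ' ≤ P := min_le_right _ _
    -- integrability of φ x on Ioc 0 P
    have hint0 : IntegrableOn (φ x) (Set.Ioo 0 δ') := by
      refine (integrableOn_zero).congr_fun ?_ measurableSet_Ioo
      intro y hy
      have : g (x - y) = g (x + y) := hδ y hy.1 (lt_of_lt_of_le hy.2 (min_le_left _ _))
      simp [hφ, this]
    have hint1 : IntegrableOn (φ x) (Set.Icc δ' P) := by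
      refine hbdd (fun y => g (x - y) - g (x + y)) ?_ ?_ _ δ' hδ'pos measurableSet_Icc ?_ ?_
      · exact ((hgmeas.comp (measurable_const.sub measurable_id)).sub
          (hgmeas.comp (measurable_const.add measurable_id)))
      · intro t
        calc |g (x - t) - g (x + t)| ≤ |g (x - t)| + |g (x + t)| := abs_sub _ _
          _ ≤ 2 := by have := hgbd (x - t); have := hgbd (x + t); linarith
      · intro y hy
        exact ⟨by linarith [hy.1, hδ'pos], hy.2⟩
      · intro y hy
        rw [abs_of_pos (lt_of_lt_of_le hδ'pos hy.1)]
        exact hy.1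
    have hφint : IntegrableOn (φ x) (Set.Ioc 0 P) := by
      refine (hint0.union hint1).mono_set ?_
      intro y hy
      rcases lt_or_ge y δ' with h | h
      · exact Or.inl ⟨hy.1, h⟩
      · exact Or.inr ⟨h, hy.2⟩
    -- tendsto of the tail integral
    have htail : Tendsto (fun ε : ℝ => ∫ y in Set.Ioc (0:ℝ) ε, φ x y) (𝓝[>] 0) (𝓝 0) := by
      have hDCT := tendsto_integral_filter_of_dominated_convergence
        (μ := volume) (l := 𝓝[>] (0:ℝ))
        (F := fun ε : ℝ => (Set.Ioc (0:ℝ) ε).indicator (φ x))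
        (f := fun _ => (0:ℝ))
        (bound := (Set.Ioc (0:ℝ) P).indicator (fun y => ‖φ x y‖))
        (Eventually.of_forall fun ε => ((hφmeas x).indicator measurableSet_Ioc).aestronglyMeasurable)
        ?_ ?_ ?_
      · have : Tendsto (fun ε : ℝ => ∫ y, (Set.Ioc (0:ℝ) ε).indicator (φ x) y) (𝓝[>] 0)
            (𝓝 0) := by simpa using hDCT
        refine this.congr fun ε => ?_
        rw [integral_indicator measurableSet_Ioc]
      · filter_upwards [Ioo_mem_nhdsGT_of_mem (Set.mem_Ico.mpr ⟨le_refl (0:ℝ), hP⟩)] with ε hε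
        refine ae_of_all _ fun y => ?_
        by_cases hy : y ∈ Set.Ioc (0:ℝ) ε
        · rw [Set.indicator_of_mem hy,
            Set.indicator_of_mem (Set.Ioc_subset_Ioc_right hε.2.le hy)]
        · rw [Set.indicator_of_notMem hy, norm_zero]
          exact Set.indicator_nonneg (fun _ _ => norm_nonneg _) y
      · exact (integrable_indicator_iff measurableSet_Ioc).mpr hφint.norm
      · refine ae_of_all _ fun y => ?_
        rcases le_or_gt y 0 with h | h
        · have : ∀ ε : ℝ, (Set.Ioc (0:ℝ) ε).indicator (φ x) y = 0 := by
            intro ε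
            exact Set.indicator_of_notMem (fun hc => absurd hc.1 (not_lt.mpr h)) _
          simpa [this] using tendsto_const_nhds
        · refine Tendsto.congr' ?_ tendsto_const_nhds
          filter_upwards [Ioo_mem_nhdsGT_of_mem (Set.mem_Ico.mpr ⟨le_refl (0:ℝ), h⟩)] with ε hε
          exact (Set.indicator_of_notMem (fun hc => absurd hc.2 (not_le.mpr hε.2)) _).symm
    rw [hper]
    show Tendsto (fun ε : ℝ => ∫ y in Set.Ioo (-P) P \ Set.Ioo (-ε) ε, K y * g (x - y))
      (𝓝[>] 0) (𝓝 (Gg x))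
    have hGgx : Gg x = ∫ y in Set.Ioo (0:ℝ) P, φ x y := rfl
    have hmain : Tendsto (fun ε : ℝ => (∫ y in Set.Ioo (0:ℝ) P, φ x y)
        - ∫ y in Set.Ioc (0:ℝ) ε, φ x y) (𝓝[>] 0)
        (𝓝 ((∫ y in Set.Ioo (0:ℝ) P, φ x y) - 0)) := tendsto_const_nhds.sub htail
    rw [sub_zero, ← hGgx] at hmain
    refine Tendsto.congr' ?_ hmain
    filter_upwards [Ioo_mem_nhdsGT_of_mem (Set.mem_Ico.mpr ⟨le_refl (0:ℝ), hP⟩)] with ε hε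
    have hε0 : 0 < ε := hε.1
    have hεP : ε < P := hε.2
    -- split [0,P) integral
    have hsplit : (∫ y in Set.Ioo (0:ℝ) P, φ x y)
        = (∫ y in Set.Ioc (0:ℝ) ε, φ x y) + ∫ y in Set.Ioo ε P, φ x y := by
      rw [← Set.Ioc_union_Ioo_eq_Ioo hε0.le hεP]
      refine setIntegral_union ?_ measurableSet_Ioo ?_ ?_
      · refine Set.disjoint_left.mpr ?_
        rintro y ⟨_, h1⟩ ⟨h2, _⟩
        exact absurd h2 (not_lt.mpr h1)
      · exact hφint.mono_set (Set.Ioc_subset_Ioc_right hεP.le)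
      · exact hφint.mono_set fun y hy => ⟨hε0.trans hy.1, hy.2.le⟩
    -- the set decomposition
    have hset : Set.Ioo (-P) P \ Set.Ioo (-ε) ε = Set.Ioc (-P) (-ε) ∪ Set.Ico ε P := by
      ext y
      simp only [Set.mem_diff, Set.mem_Ioo, Set.mem_union, Set.mem_Ioc, Set.mem_Ico,
        not_and, not_lt]
      constructor
      · rintro ⟨⟨h1, h2⟩, h3⟩
        rcases le_or_gt y (-ε) with h4 | h4
        · exact Or.inl ⟨h1, h4⟩
        · exact Or.inr ⟨h3 h4, h2⟩
      · rintro (⟨h1, h2⟩ | ⟨h1, h2⟩)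
        · exact ⟨⟨h1, by linarith⟩, fun hc => by linarith⟩
        · exact ⟨⟨by linarith, h2⟩, fun _ => h1⟩
    have hi_left : IntegrableOn (fun y => K y * g (x - y)) (Set.Ioc (-P) (-ε)) := by
      refine hbdd (fun y => g (x - y)) (hgmeas.comp (measurable_const.sub measurable_id)) ?_
        _ ε hε0 measurableSet_Ioc ?_ ?_
      · intro t; linarith [hgbd (x - t)]
      · intro y hy; exact ⟨hy.1.le, by linarith [hy.2]⟩
      · intro y hy
        rw [abs_of_neg (by linarith [hy.2] : y < 0)]
        linarith [hy.2]
    have hi_right : IntegrableOn (fun y => K y * g (x - y)) (Set.Ico ε P) := by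
      refine hbdd (fun y => g (x - y)) (hgmeas.comp (measurable_const.sub measurable_id)) ?_
        _ ε hε0 measurableSet_Ico ?_ ?_
      · intro t; linarith [hgbd (x - t)]
      · intro y hy; exact ⟨by linarith [hy.1], hy.2.le⟩
      · intro y hy
        rw [abs_of_pos (by linarith [hy.1] : 0 < y)]
        exact hy.1
    have hi_right' : IntegrableOn (fun y => K y * g (x + y)) (Set.Ico ε P) := by
      refine hbdd (fun y => g (x + y)) (hgmeas.comp (measurable_const.add measurable_id)) ?_
        _ ε hε0 measurableSet_Ico ?_ ?_
      · intro t; linarith [hgbd (x + t)]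
      · intro y hy; exact ⟨by linarith [hy.1], hy.2.le⟩
      · intro y hy
        rw [abs_of_pos (by linarith [hy.1] : 0 < y)]
        exact hy.1
    -- reflection
    have hneg : (∫ y in Set.Ioc (-P) (-ε), K y * g (x - y))
        = - ∫ y in Set.Ico ε P, K y * g (x + y) := by
      have hpre : (Neg.neg : ℝ → ℝ) ⁻¹' (Set.Ioc (-P) (-ε)) = Set.Ico ε P := by
        ext y
        simp only [Set.mem_preimage, Set.mem_Ioc, Set.mem_Ico]
        constructor
        · rintro ⟨h1, h2⟩; exact ⟨by linarith, by linarith⟩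
        · rintro ⟨h1, h2⟩; exact ⟨by linarith, by linarith⟩
      have hemb : MeasurableEmbedding (Neg.neg : ℝ → ℝ) :=
        (MeasurableEquiv.neg ℝ).measurableEmbedding
      have h := MeasurePreserving.setIntegral_preimage_emb
        (Measure.measurePreserving_neg volume) hemb
        (fun y => K y * g (x - y)) (Set.Ioc (-P) (-ε))
      rw [hpre] at h
      rw [← h]
      rw [← integral_neg]
      refine setIntegral_congr_fun measurableSet_Ico fun y hy => ?_
      rw [hKodd y]
      ring_nf
    have hdisj2 : Disjoint (Set.Ioc (-P) (-ε)) (Set.Ico ε P) := by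
      refine Set.disjoint_left.mpr ?_
      rintro y ⟨_, h1⟩ ⟨h2, _⟩
      linarith
    have hIcoIoo : (∫ y in Set.Ico ε P, φ x y) = ∫ y in Set.Ioo ε P, φ x y :=
      setIntegral_congr_set Ioo_ae_eq_Ico.symm
    have hsub : (∫ y in Set.Ico ε P, K y * g (x - y)) - ∫ y in Set.Ico ε P, K y * g (x + y)
        = ∫ y in Set.Ico ε P, φ x y := by
      rw [← integral_sub hi_right hi_right']
      refine setIntegral_congr_fun measurableSet_Ico fun y hy => ?_
      simp only [hφ]
      ring
    have hIeq : (∫ y in Set.Ioo (-P) P \ Set.Ioo (-ε) ε, K y * g (x - y))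
        = (∫ y in Set.Ioo (0:ℝ) P, φ x y) - ∫ y in Set.Ioc (0:ℝ) ε, φ x y := by
      rw [hset, setIntegral_union hdisj2 measurableSet_Ico hi_left hi_right, hneg, hsplit]
      linarith [hsub, hIcoIoo]
    exact hIeq.symm
  -- PART 2 : the L¹ bound
  set L : ℝ := b - a with hL
  have hL0 : 0 ≤ L := by simp [hL]; linarith
  set M : ℝ := ∫ y in Set.Ioo (0:ℝ) P, (C/y) * min (4*y) (2*L) with hM
  have hMnn : 0 ≤ M := by
    rw [hM]
    refine setIntegral_nonneg measurableSet_Ioo fun y hy => ?_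
    have : 0 < y := hy.1
    have h1 : 0 ≤ C / y := by positivity
    have h2 : (0:ℝ) ≤ min (4*y) (2*L) := le_min (by linarith) (by linarith)
    exact mul_nonneg h1 h2
  have hintM : IntegrableOn (fun y => (C/y) * min (4*y) (2*L)) (Set.Ioo (0:ℝ) P) := by
    refine Measure.integrableOn_of_bounded (M := 4*C) ?_ ?_ ?_
    · rw [Real.volume_Ioo]; exact ENNReal.ofReal_lt_top.ne
    · refine Measurable.aestronglyMeasurable ?_
      exact (measurable_const.div measurable_id).mul
        ((measurable_const.mul measurable_id).min measurable_const)
    · refine (ae_restrict_iff' measurableSet_Ioo).mpr (ae_of_all _ ?_)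
      intro y hy
      have hy0 : 0 < y := hy.1
      have h1 : 0 ≤ C / y := by positivity
      have h2 : (0:ℝ) ≤ min (4*y) (2*L) := le_min (by linarith) (by linarith)
      rw [Real.norm_eq_abs, abs_of_nonneg (mul_nonneg h1 h2)]
      calc (C/y) * min (4*y) (2*L) ≤ (C/y) * (4*y) :=
            mul_le_mul_of_nonneg_left (min_le_left _ _) h1
        _ = 4*C := by field_simp
  have key : (∫⁻ x in Set.Icc (-P) P, ENNReal.ofReal |Gg x|) ≤ ENNReal.ofReal M := by
    have step1 : ∀ x, ENNReal.ofReal |Gg x|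
        ≤ ∫⁻ y in Set.Ioo (0:ℝ) P,
            ENNReal.ofReal (C/y) * ENNReal.ofReal |g (x - y) - g (x + y)| := by
      intro x
      have h1 : |Gg x| ≤ ∫ y in Set.Ioo (0:ℝ) P, ‖φ x y‖ := by
        rw [← Real.norm_eq_abs]
        exact norm_integral_le_integral_norm _
      have h2 : ENNReal.ofReal (∫ y in Set.Ioo (0:ℝ) P, ‖φ x y‖)
          ≤ ∫⁻ y in Set.Ioo (0:ℝ) P, ENNReal.ofReal ‖φ x y‖ := by
        by_cases hi : IntegrableOn (fun y => ‖φ x y‖) (Set.Ioo (0:ℝ) P)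
        · rw [ofReal_integral_eq_lintegral_ofReal hi (ae_of_all _ fun y => norm_nonneg _)]
        · rw [integral_undef hi]; simp
      refine le_trans (ENNReal.ofReal_le_ofReal h1) (le_trans h2 ?_)
      refine setLIntegral_mono ?_ fun y hy => ?_
      · refine Measurable.fun_mul ?_ ?_
        · exact ENNReal.measurable_ofReal.comp (measurable_const.div measurable_id)
        · refine ENNReal.measurable_ofReal.comp ?_
          exact ((hgmeas.comp (measurable_const.sub measurable_id)).sub
            (hgmeas.comp (measurable_const.add measurable_id))).abs
      · have hy0 : 0 < y := hy.1
        have hKy : |K y| ≤ C / y := by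
          have := hKb y ⟨by linarith [hy.2], hy.2.le⟩ (ne_of_gt hy0)
          rwa [abs_of_pos hy0] at this
        calc ENNReal.ofReal ‖φ x y‖
            = ENNReal.ofReal (|K y| * |g (x - y) - g (x + y)|) := by
              rw [Real.norm_eq_abs]
              simp only [hφ]
              rw [abs_mul]
          _ ≤ ENNReal.ofReal ((C/y) * |g (x - y) - g (x + y)|) :=
              ENNReal.ofReal_le_ofReal
                (mul_le_mul_of_nonneg_right hKy (abs_nonneg _))
          _ = ENNReal.ofReal (C/y) * ENNReal.ofReal |g (x - y) - g (x + y)| :=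
              ENNReal.ofReal_mul (by positivity)
    calc (∫⁻ x in Set.Icc (-P) P, ENNReal.ofReal |Gg x|)
        ≤ ∫⁻ x in Set.Icc (-P) P, ∫⁻ y in Set.Ioo (0:ℝ) P,
            ENNReal.ofReal (C/y) * ENNReal.ofReal |g (x - y) - g (x + y)| :=
          lintegral_mono fun x => step1 x
      _ = ∫⁻ y in Set.Ioo (0:ℝ) P, ∫⁻ x in Set.Icc (-P) P,
            ENNReal.ofReal (C/y) * ENNReal.ofReal |g (x - y) - g (x + y)| := by
          refine lintegral_lintegral_swap ?_
          refine Measurable.aemeasurable ?_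
          refine Measurable.fun_mul ?_ ?_
          · exact ENNReal.measurable_ofReal.comp
              ((measurable_const.div measurable_snd))
          · refine ENNReal.measurable_ofReal.comp ?_
            exact ((hgmeas.comp (measurable_fst.sub measurable_snd)).sub
              (hgmeas.comp (measurable_fst.add measurable_snd))).abs
      _ ≤ ∫⁻ y in Set.Ioo (0:ℝ) P, ENNReal.ofReal ((C/y) * min (4*y) (2*L)) := by
          refine setLIntegral_mono ?_ fun y hy => ?_
          · exact ENNReal.measurable_ofReal.comp
              ((measurable_const.div measurable_id).mul
                ((measurable_const.mul measurable_id).min measurable_const))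
          · have hy0 : 0 < y := hy.1
            have hmeasd : Measurable fun x => ENNReal.ofReal |g (x - y) - g (x + y)| :=
              ENNReal.measurable_ofReal.comp
                ((hgmeas.comp (measurable_id.sub measurable_const)).sub
                  (hgmeas.comp (measurable_id.add measurable_const))).abs
            rw [lintegral_const_mul _ hmeasd,
              ENNReal.ofReal_mul (by positivity : (0:ℝ) ≤ C/y)]
            refine mul_le_mul_right ?_ _
            have hld := lint_diff_le P a b hP hab hy0
            rw [← hg, ← hL] at hld
            exact hld
      _ = ENNReal.ofReal M := by
          rw [hM]
          rw [ofReal_integral_eq_lintegral_ofReal hintM ?_]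
          refine (ae_restrict_iff' measurableSet_Ioo).mpr (ae_of_all _ ?_)
          intro y hy
          have hy0 : 0 < y := hy.1
          have h2 : (0:ℝ) ≤ min (4*y) (2*L) := le_min (by linarith) (by linarith)
          positivity
  have hGgIntegrable : IntegrableOn Gg (Set.Icc (-P) P) := by
    refine ⟨hGgm.aestronglyMeasurable, ?_⟩
    rw [hasFiniteIntegral_iff_norm]
    have : ∀ x, ENNReal.ofReal ‖Gg x‖ = ENNReal.ofReal |Gg x| := by
      intro x; rw [Real.norm_eq_abs]
    calc ∫⁻ x in Set.Icc (-P) P, ENNReal.ofReal ‖Gg x‖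
        = ∫⁻ x in Set.Icc (-P) P, ENNReal.ofReal |Gg x| := lintegral_congr this
      _ ≤ ENNReal.ofReal M := key
      _ < ⊤ := ENNReal.ofReal_lt_top
  refine ⟨Gg, hae, hGgIntegrable, ?_⟩
  have hfinal : (∫ x in Set.Icc (-P) P, |Gg x|) ≤ M := by
    rw [integral_eq_lintegral_of_nonneg_ae (ae_of_all _ fun x => abs_nonneg _)
      (hGgm.measurable.abs.aestronglyMeasurable)]
    have hle : (∫⁻ x in Set.Icc (-P) P, ENNReal.ofReal |Gg x|).toReal
        ≤ (ENNReal.ofReal M).toReal := ENNReal.toReal_mono ENNReal.ofReal_ne_top key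
    calc (∫⁻ x in Set.Icc (-P) P, ENNReal.ofReal |Gg x|).toReal
        ≤ (ENNReal.ofReal M).toReal := hle
      _ = M := ENNReal.toReal_ofReal hMnn
  refine le_trans hfinal ?_
  rcases eq_or_lt_of_le hL0 with hL0' | hL0'
  · -- L = 0
    have hLz : L = 0 := hL0'.symm
    have hM0 : M = 0 := by
      rw [hM]
      have h0 : Set.EqOn (fun y : ℝ => (C/y) * min (4*y) (2*L)) (fun _ : ℝ => (0:ℝ))
          (Set.Ioo (0:ℝ) P) := by
        intro y hy
        have h1 : (2:ℝ)*L = 0 := by rw [hLz]; ring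
        simp only
        rw [h1, min_eq_right (by linarith [hy.1] : (0:ℝ) ≤ 4*y), mul_zero]
      rw [setIntegral_congr_fun measurableSet_Ioo h0]
      simp
    rw [hM0, hLz]
    norm_num
  · have hL2P : L ≤ 2*P := by rw [hL]; linarith
    have hcalc := calc_int hP hC hL0' hL2P
    rw [← hM] at hcalc
    rw [hcalc]
    have hlog2 : (0:ℝ) ≤ Real.log 2 := Real.log_nonneg (by norm_num)
    nlinarith [mul_pos hC hL0', mul_nonneg (mul_nonneg hC.le hL0'.le) hlog2]

end
end

section
/- Let p₁ ≥ 1 and C_f > 0, and let f : ℝ → ℝ be C¹ with f' nondecreasing and f'(a+s) − f'(a) ≥ C_f s^{p₁} for all a ∈ ℝ and s > 0. Define the entropy flux q(v) = ∫₀^v s f'(s) ds. Then for every ω ≥ 0: (ω²/2)·f'(ω) − q(ω) ≥ (ω²/8)·(f'(ω) − f'(ω/2)) ≥ (C_f/2^{3+p₁})·ω^{2+p₁}. If moreover |f'(s)| ≤ C_f(1+|s|)^{p₂} for all s ∈ ℝ with p₁ ≤ p₂ < p₁ + 2 and γ_p := p₂/(2+p₁), then also (ω²/2)·f'(ω) −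 q(ω) ≥ (C_f/2^{3+p₁})·( |f'(ω)|^{1/γ_p}/(C_f^{1/γ_p}·2^{1+p₁}) − 1 ) for every ω ≥ 0. -/
open MeasureTheory intervalIntegral

private lemma convex_pow_bound (x r : ℝ) (hx : 0 ≤ x) (hr : 1 ≤ r) :
    (1 + x) ^ r ≤ (2:ℝ) ^ (r - 1) * (1 + x ^ r) := by
  have h := (convexOn_rpow hr).2 (Set.mem_Ici.2 zero_le_one) (Set.mem_Ici.2 hx)
    (by norm_num : (0:ℝ) ≤ 1/2) (by norm_num : (0:ℝ) ≤ 1/2) (by norm_num)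
  simp only [smul_eq_mul] at h
  have h2 : ((1 + x)/2) ^ r ≤ (1 ^ r + x ^ r)/2 := by
    rw [show (1+x)/2 = 1/2*1 + 1/2*x from by ring]; linarith
  have hpos : (0:ℝ) < 2 := two_pos
  have key : (1 + x) ^ r = 2 ^ r * ((1 + x)/2) ^ r := by
    rw [← Real.mul_rpow (by positivity) (by positivity)]
    ring_nf
  rw [key]
  calc (2:ℝ) ^ r * ((1 + x)/2) ^ r ≤ 2 ^ r * ((1 ^ r + x ^ r)/2) := by
        apply mul_le_mul_of_nonneg_left h2 (by positivity)
    _ = 2 ^ (r - 1) * (1 + x ^ r) := by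
        rw [Real.one_rpow, Real.rpow_sub hpos, Real.rpow_one]; ring

/-- **Entropy dissipation lower bounds** (estimates in Step 1 of Lemma 2.4).
Let `f` be `C¹` with nondecreasing derivative and `f'(a+s) - f'(a) ≥ C_f s^{p₁}` for all
`a ∈ ℝ`, `s > 0`, and let `q(v) = ∫₀^v s f'(s) ds` be the entropy flux associated to the
quadratic entropy `η(v) = v²/2`. Then for every `ω ≥ 0`,
`η(ω) f'(ω) - q(ω) ≥ (ω²/8)(f'(ω) - f'(ω/2)) ≥ (C_f/2^{3+p₁}) ω^{2+p₁}`; and if moreover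
`|f'(s)| ≤ C_f (1+|s|)^{p₂}` with `p₁ ≤ p₂ < p₁ + 2` and `γ_p = p₂/(2+p₁)`, then also
`η(ω) f'(ω) - q(ω) ≥ (C_f/2^{3+p₁}) (|f'(ω)|^{1/γ_p} / (C_f^{1/γ_p} 2^{1+p₁}) - 1)`. -/
theorem entropy_flux_lower_bounds
    (p₁ C_f : ℝ) (f : ℝ → ℝ)
    (hp₁ : 1 ≤ p₁) (hCf : 0 < C_f)
    (hf : ContDiff ℝ 1 f) (hmono : Monotone (deriv f))
    (hincr : ∀ a s : ℝ, 0 < s → C_f * s ^ p₁ ≤ deriv f (a + s) - deriv f a) :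
    (∀ ω : ℝ, 0 ≤ ω →
      (ω ^ 2 / 8) * (deriv f ω - deriv f (ω / 2)) ≤
          (ω ^ 2 / 2) * deriv f ω - (∫ s in (0:ℝ)..ω, s * deriv f s) ∧
      (C_f / 2 ^ (3 + p₁)) * ω ^ (2 + p₁) ≤
          (ω ^ 2 / 8) * (deriv f ω - deriv f (ω / 2))) ∧
    (∀ p₂ : ℝ, p₁ ≤ p₂ → p₂ < p₁ + 2 →
      (∀ s : ℝ, |deriv f s| ≤ C_f * (1 + |s|) ^ p₂) →
      ∀ ω : ℝ, 0 ≤ ω →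
        (C_f / 2 ^ (3 + p₁)) *
            (|deriv f ω| ^ (1 / (p₂ / (2 + p₁))) /
              (C_f ^ (1 / (p₂ / (2 + p₁))) * 2 ^ (1 + p₁)) - 1) ≤
          (ω ^ 2 / 2) * deriv f ω - (∫ s in (0:ℝ)..ω, s * deriv f s)) := by
  have hg : Continuous (deriv f) := hf.continuous_deriv le_rfl
  have h2p : (0:ℝ) < 2 ^ p₁ := Real.rpow_pos_of_pos two_pos p₁
  have h23 : (2:ℝ) ^ (3 + p₁) = 8 * 2 ^ p₁ := by
    rw [Real.rpow_add two_pos, show (3:ℝ) = ((3:ℕ):ℝ) from by norm_num, Real.rpow_natCast]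
    norm_num
  have main : ∀ ω : ℝ, 0 ≤ ω →
      (ω ^ 2 / 8) * (deriv f ω - deriv f (ω / 2)) ≤
          (ω ^ 2 / 2) * deriv f ω - (∫ s in (0:ℝ)..ω, s * deriv f s) ∧
      (C_f / 2 ^ (3 + p₁)) * ω ^ (2 + p₁) ≤
          (ω ^ 2 / 8) * (deriv f ω - deriv f (ω / 2)) := by
    intro ω hω
    constructor
    · -- first estimate
      have hI : IntervalIntegrable (fun s => s * deriv f s) volume 0 ω :=
        (continuous_id.mul hg).intervalIntegrable _ _
      have hIc : IntervalIntegrable (fun s : ℝ => s * deriv f ω) volume 0 ω :=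
        (continuous_id.mul continuous_const).intervalIntegrable _ _
      have key : ∫ s in (0:ℝ)..ω, (s * deriv f ω - s * deriv f s)
          = (ω ^ 2 / 2) * deriv f ω - ∫ s in (0:ℝ)..ω, s * deriv f s := by
        rw [intervalIntegral.integral_sub hIc hI, intervalIntegral.integral_mul_const,
          integral_id]
        ring
      rw [← key]
      have hsplit : ∫ s in (0:ℝ)..ω, (s * deriv f ω - s * deriv f s)
          = (∫ s in (0:ℝ)..(ω/2), (s * deriv f ω - s * deriv f s))
            + ∫ s in (ω/2)..ω, (s * deriv f ω - s * deriv f s) := by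
        exact (intervalIntegral.integral_add_adjacent_intervals
          (((continuous_id.mul continuous_const).sub
            (continuous_id.mul hg)).intervalIntegrable _ _)
          (((continuous_id.mul continuous_const).sub
            (continuous_id.mul hg)).intervalIntegrable _ _)).symm
      have hsecond : 0 ≤ ∫ s in (ω/2)..ω, (s * deriv f ω - s * deriv f s) := by
        apply intervalIntegral.integral_nonneg (by linarith)
        intro u hu
        have hu0 : 0 ≤ u := le_trans (by linarith) hu.1
        have : deriv f u ≤ deriv f ω := hmono hu.2
        nlinarith
      have hfirst : ∫ s in (0:ℝ)..(ω/2), (s * (deriv f ω - deriv f (ω/2)))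
          ≤ ∫ s in (0:ℝ)..(ω/2), (s * deriv f ω - s * deriv f s) := by
        apply intervalIntegral.integral_mono_on (by linarith)
          ((continuous_id.mul continuous_const).intervalIntegrable _ _)
          (((continuous_id.mul continuous_const).sub
            (continuous_id.mul hg)).intervalIntegrable _ _)
        intro u hu
        have : deriv f u ≤ deriv f (ω/2) := hmono hu.2
        simp only [Pi.mul_apply, Pi.sub_apply, id_eq]
        nlinarith [hu.1]
      have hcomp : ∫ s in (0:ℝ)..(ω/2), (s * (deriv f ω - deriv f (ω/2)))
          = (ω ^ 2 / 8) * (deriv f ω - deriv f (ω / 2)) := by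
        rw [intervalIntegral.integral_mul_const, integral_id]
        ring
      rw [hsplit]
      rw [hcomp] at hfirst
      linarith
    · -- second estimate
      rcases eq_or_lt_of_le hω with h0 | hωpos
      · rw [← h0, Real.zero_rpow (by positivity)]
        norm_num
      · have h := hincr (ω/2) (ω/2) (by linarith)
        rw [show ω/2 + ω/2 = ω from by ring] at h
        have hmul : (ω ^ 2 / 8) * (C_f * (ω/2) ^ p₁)
            ≤ (ω ^ 2 / 8) * (deriv f ω - deriv f (ω / 2)) :=
          mul_le_mul_of_nonneg_left h (by positivity)
        refine le_trans (le_of_eq ?_) hmul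
        rw [Real.div_rpow hω (by norm_num : (0:ℝ) ≤ 2), h23,
          Real.rpow_add hωpos, show ω ^ (2:ℝ) = ω ^ 2 from Real.rpow_two ω]
        field_simp
  refine ⟨main, ?_⟩
  intro p₂ hp₂₁ hp₂₂ hbound ω hω
  have hm := main ω hω
  have hD : (C_f / 2 ^ (3 + p₁)) * ω ^ (2 + p₁) ≤
      (ω ^ 2 / 2) * deriv f ω - (∫ s in (0:ℝ)..ω, s * deriv f s) := hm.2.trans hm.1
  have hp₂pos : 0 < p₂ := by linarith
  have hc : 1 / (p₂ / (2 + p₁)) = (2 + p₁) / p₂ := one_div_div _ _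
  set c := (2 + p₁) / p₂ with hcdef
  have hcpos : 0 < c := by positivity
  have hb := hbound ω
  rw [abs_of_nonneg hω] at hb
  have h1ω : (0:ℝ) ≤ 1 + ω := by linarith
  have hnum : |deriv f ω| ^ c ≤ C_f ^ c * (1 + ω) ^ (2 + p₁) := by
    calc |deriv f ω| ^ c ≤ (C_f * (1 + ω) ^ p₂) ^ c :=
          Real.rpow_le_rpow (abs_nonneg _) hb hcpos.le
      _ = C_f ^ c * ((1 + ω) ^ p₂) ^ c := Real.mul_rpow hCf.le (by positivity)
      _ = C_f ^ c * (1 + ω) ^ (2 + p₁) := by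
          rw [← Real.rpow_mul h1ω]
          congr 1
          rw [hcdef]
          field_simp
  have h2pow : (0:ℝ) < 2 ^ (1 + p₁) := Real.rpow_pos_of_pos two_pos _
  have hCfc : (0:ℝ) < C_f ^ c := Real.rpow_pos_of_pos hCf _
  have hX : |deriv f ω| ^ c / (C_f ^ c * 2 ^ (1 + p₁))
      ≤ (1 + ω) ^ (2 + p₁) / 2 ^ (1 + p₁) := by
    rw [show (1 + ω) ^ (2 + p₁) / 2 ^ (1 + p₁)
        = C_f ^ c * (1 + ω) ^ (2 + p₁) / (C_f ^ c * 2 ^ (1 + p₁)) from by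
      rw [mul_div_mul_left _ _ (ne_of_gt hCfc)]]
    exact div_le_div_of_nonneg_right hnum (by positivity) |>.trans_eq rfl
  have hconv : (1 + ω) ^ (2 + p₁) ≤ 2 ^ (1 + p₁) * (1 + ω ^ (2 + p₁)) := by
    have := convex_pow_bound ω (2 + p₁) hω (by linarith)
    rwa [show (2 + p₁) - 1 = 1 + p₁ from by ring] at this
  have hXfinal : |deriv f ω| ^ c / (C_f ^ c * 2 ^ (1 + p₁)) - 1 ≤ ω ^ (2 + p₁) := by
    have : (1 + ω) ^ (2 + p₁) / 2 ^ (1 + p₁) ≤ 1 + ω ^ (2 + p₁) := by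
      rw [div_le_iff₀ h2pow]
      nlinarith
    linarith
  rw [hc]
  calc (C_f / 2 ^ (3 + p₁)) * (|deriv f ω| ^ c / (C_f ^ c * 2 ^ (1 + p₁)) - 1)
      ≤ (C_f / 2 ^ (3 + p₁)) * ω ^ (2 + p₁) :=
        mul_le_mul_of_nonneg_left hXfinal (by positivity)
    _ ≤ _ := hD
end
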